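/- arXiv:1511.00113 — 5 statements merged into one kernel-verified Lean document; each statement's English description precedes it below -/
import Mathlib

section
/- Let δ ∈ (0,1), 2 ≤ d ≤ n/12, 1 ≤ k ≤ δ·n/(4ed), γ_k = (2ekd/(δn))^{δd}, and let ℓ ≤ k. Let I ⊆ [n] with |I| ≤ n/8 and H ⊆ [n]×[n]. Then for every pair of subsets J ⊆ S ⊆ [n]∖I with |S| = k and |J| = ℓ, one has |Γ(S,J,δ) ∩ D(I,H)| ≤ γ_k^ℓ · |D(I,H)|. -/
open Finset
open scoped Classical

/-- `Dreg n d` is the set of `d`-regular digraphs on `n` vertices, encoded by their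
Bool adjacency matrices: `G i j = true` iff there is an edge from `i` to `j`. -/
def Dreg (n d : ℕ) : Finset (Fin n → Fin n → Bool) :=
  Finset.univ.filter fun G =>
    (∀ i, (Finset.univ.filter fun j => G i j = true).card = d) ∧
    (∀ j, (Finset.univ.filter fun i => G i j = true).card = d)

/-- `Dcond n d S F` is the set of graphs in `Dreg n d` whose set of in-edges of `S`
(edges `(i,j)` with `j ∈ S`) equals `F`. -/
def Dcond (n d : ℕ) (S : Finset (Fin n)) (F : Finset (Fin n × Fin n)) :
    Finset (Fin n → Fin n → Bool) :=
  (Dreg n d).filter fun G =>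
    (Finset.univ.filter fun p : Fin n × Fin n => G p.1 p.2 = true ∧ p.2 ∈ S) = F

/-- `GammaSet n d δ S J`: graphs in which every `j ∈ J` has at least `δ d` common
in-neighbors with the set of vertices of `S` preceding `j`. -/
noncomputable def GammaSet (n d : ℕ) (δ : ℝ) (S J : Finset (Fin n)) :
    Finset (Fin n → Fin n → Bool) :=
  (Dreg n d).filter fun G => ∀ j ∈ J,
    δ * d ≤ ((Finset.univ.filter fun v : Fin n =>
      ∃ i ∈ S, i < j ∧ G v i = true ∧ G v j = true).card : ℝ)

namespace CorAl

variable {n : ℕ}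
noncomputable def colN (G : Fin n → Fin n → Bool) (j : Fin n) : Finset (Fin n) :=
  Finset.univ.filter fun i => G i j = true
noncomputable def rowN (G : Fin n → Fin n → Bool) (i : Fin n) : Finset (Fin n) :=
  Finset.univ.filter fun j => G i j = true
lemma mem_Dreg {d : ℕ} {G : Fin n → Fin n → Bool} :
    G ∈ Dreg n d ↔ (∀ i, (rowN G i).card = d) ∧ (∀ j, (colN G j).card = d) := by
  simp [Dreg, rowN, colN]
lemma mem_Dcond {d : ℕ} {W : Finset (Fin n)} {F : Finset (Fin n × Fin n)}
    {G : Fin n → Fin n → Bool} :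
    G ∈ Dcond n d W F ↔ G ∈ Dreg n d ∧
      (Finset.univ.filter fun p : Fin n × Fin n => G p.1 p.2 = true ∧ p.2 ∈ W) = F := by
  simp [Dcond]

noncomputable def swG (G : Fin n → Fin n → Bool) (v w z j : Fin n) :
    Fin n → Fin n → Bool := fun a b =>
  if b = j then (if a = v then false else if a = w then true else G a b)
  else if b = z then (if a = w then false else if a = v then true else G a b)
  else G a b

section swG
variable {G : Fin n → Fin n → Bool} {v w z j : Fin n}
variable (hvw : v ≠ w) (hzj : z ≠ j)
variable (hvj : G v j = true) (hwj : G w j = false)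
variable (hwz : G w z = true) (hvz : G v z = false)
lemma swG_vj : swG G v w z j v j = false := by simp [swG]
include hvw in
lemma swG_wj : swG G v w z j w j = true := by simp [swG, hvw.symm]
include hzj in
lemma swG_wz : swG G v w z j w z = false := by simp [swG, hzj]
include hvw hzj in
lemma swG_vz : swG G v w z j v z = true := by simp [swG, hzj, hvw]
lemma swG_other {a b : Fin n} (hb : b ≠ j) (hb' : b ≠ z) :
    swG G v w z j a b = G a b := by simp [swG, hb, hb']
include hvw hzj hvj hwj hwz hvz in
lemma swG_swG : swG (swG G v w z j) w v z j = G := by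
  funext a b
  by_cases hbj : b = j
  · subst hbj
    by_cases haw : a = w
    · subst haw; simp [swG, hzj, hvw.symm, hwj]
    · by_cases hav : a = v
      · subst hav; simp [swG, hvw, hzj, hvj]
      · simp [swG, haw, hav]
  · by_cases hbz : b = z
    · subst hbz
      by_cases hav : a = v
      · subst hav; simp [swG, hbj, hvw, hvz]
      · by_cases haw : a = w
        · subst haw; simp [swG, hbj, hvw.symm, hwz]
        · simp [swG, hbj, hav, haw]
    · simp [swG, hbj, hbz]
include hvw in
lemma swG_colN_j : colN (swG G v w z j) j = insert w ((colN G j).erase v) := by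
  ext a
  by_cases hav : a = v
  · subst hav; simp [colN, swG, hvw]
  · by_cases haw : a = w
    · subst haw; simp [colN, swG, hvw.symm]
    · simp [colN, swG, hav, haw]
include hvw hzj in
lemma swG_colN_z : colN (swG G v w z j) z = insert v ((colN G z).erase w) := by
  ext a
  by_cases haw : a = w
  · subst haw; simp [colN, swG, hzj, hvw.symm]
  · by_cases hav : a = v
    · subst hav; simp [colN, swG, hzj, hvw]
    · simp [colN, swG, hav, haw, hzj]
lemma swG_colN_other {c : Fin n} (hc : c ≠ j) (hc' : c ≠ z) :
    colN (swG G v w z j) c = colN G c := by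
  ext a; simp [colN, swG_other hc hc']
include hvw hzj in
lemma swG_rowN_v : rowN (swG G v w z j) v = insert z ((rowN G v).erase j) := by
  ext b
  by_cases hbj : b = j
  · subst hbj; simp [swG, rowN, hzj, Ne.symm hzj]
  · by_cases hbz : b = z
    · subst hbz; simp [swG, rowN, hbj, hzj, hvw]
    · simp [swG, rowN, hbj, hbz]
include hvw hzj in
lemma swG_rowN_w : rowN (swG G v w z j) w = insert j ((rowN G w).erase z) := by
  ext b
  by_cases hbj : b = j
  · subst hbj; simp [swG, rowN, hzj.symm, hvw.symm]
  · by_cases hbz : b = z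
    · subst hbz; simp [swG, rowN, hbj]
    · simp [swG, rowN, hbj, hbz]
lemma swG_rowN_other {a : Fin n} (ha : a ≠ v) (ha' : a ≠ w) :
    rowN (swG G v w z j) a = rowN G a := by
  ext b; simp [swG, rowN, ha, ha']
end swG

lemma card_insert_erase {α : Type*} [DecidableEq α] {s : Finset α} {v w : α}
    (hv : v ∈ s) (hw : w ∉ s) : (insert w (s.erase v)).card = s.card := by
  rw [card_insert_of_notMem (fun h => hw (mem_of_mem_erase h)), card_erase_of_mem hv]
  exact Nat.succ_pred_eq_of_pos (card_pos.mpr ⟨v, hv⟩)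

section counting
variable {α β : Type*} [Fintype α] [Fintype β] [DecidableEq α] [DecidableEq β]
lemma card_pairs_fst (A : Finset α) (R : α → Finset β) :
    (Finset.univ.filter fun p : α × β => p.1 ∈ A ∧ p.2 ∈ R p.1).card
      = ∑ a ∈ A, (R a).card := by
  rw [Finset.card_eq_sum_card_fiberwise (f := Prod.fst) (t := A)
    (fun p hp => (mem_filter.mp hp).2.1)]
  refine Finset.sum_congr rfl fun a ha => ?_
  apply Finset.card_bij (fun p _ => p.2)
  · intro p hp
    simp only [mem_filter, mem_univ, true_and] at hp
    rcases hp with ⟨⟨_, h2⟩, h3⟩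
    rwa [h3] at h2
  · intro p hp q hq h
    simp only [mem_filter] at hp hq
    exact Prod.ext (hp.2.trans hq.2.symm) h
  · intro b hb
    exact ⟨(a, b), by simp [ha, hb], rfl⟩
lemma card_pairs_snd (A : Finset β) (R : β → Finset α) :
    (Finset.univ.filter fun p : α × β => p.2 ∈ A ∧ p.1 ∈ R p.2).card
      = ∑ b ∈ A, (R b).card := by
  rw [Finset.card_eq_sum_card_fiberwise (f := Prod.snd) (t := A)
    (fun p hp => (mem_filter.mp hp).2.1)]
  refine Finset.sum_congr rfl fun b hb => ?_
  apply Finset.card_bij (fun p _ => p.1)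
  · intro p hp
    simp only [mem_filter, mem_univ, true_and] at hp
    rcases hp with ⟨⟨_, h2⟩, h3⟩
    rwa [h3] at h2
  · intro p hp q hq h
    simp only [mem_filter] at hp hq
    exact Prod.ext h (hp.2.trans hq.2.symm)
  · intro a ha'
    exact ⟨(a, b), by simp [ha', hb], rfl⟩
lemma card_pairs_fst_le (A : Finset α) (R : α → Finset β) {c : ℕ}
    (h : ∀ a ∈ A, (R a).card ≤ c) :
    (Finset.univ.filter fun p : α × β => p.1 ∈ A ∧ p.2 ∈ R p.1).card ≤ A.card * c := by
  rw [card_pairs_fst]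
  calc ∑ a ∈ A, (R a).card ≤ ∑ _a ∈ A, c := Finset.sum_le_sum h
  _ = A.card * c := by rw [Finset.sum_const, smul_eq_mul]
lemma card_pairs_snd_le (A : Finset β) (R : β → Finset α) {c : ℕ}
    (h : ∀ a ∈ A, (R a).card ≤ c) :
    (Finset.univ.filter fun p : α × β => p.2 ∈ A ∧ p.1 ∈ R p.2).card ≤ A.card * c := by
  rw [card_pairs_snd]
  calc ∑ a ∈ A, (R a).card ≤ ∑ _a ∈ A, c := Finset.sum_le_sum h
  _ = A.card * c := by rw [Finset.sum_const, smul_eq_mul]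
end counting

set_option maxHeartbeats 2000000 in
/-- The key switching inequality. -/
lemma switching (n d : ℕ) (W : Finset (Fin n)) (F : Finset (Fin n × Fin n)) (j : Fin n)
    (hjW : j ∉ W) (U : Finset (Fin n)) (s m : ℕ) (hs : 1 ≤ s)
    (hm : m + U.card * d + 2*(d*d) + (W.card + 1) * d ≤ n * d) :
    s * m * (((Dcond n d W F).filter fun G => (colN G j ∩ U).card = s).card)
      ≤ U.card * (d*d) *
        (((Dcond n d W F).filter fun G => (colN G j ∩ U).card = s-1).card) := by
  classical
  set D := Dcond n d W F with hD
  set Ds := D.filter (fun G => (colN G j ∩ U).card = s) with hDs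
  set Ds' := D.filter (fun G => (colN G j ∩ U).card = s-1) with hDs'
  -- the set of candidate pairs (w,z)
  set E : (Fin n → Fin n → Bool) → Finset (Fin n × Fin n) :=
    fun G => Finset.univ.filter fun p : Fin n × Fin n =>
      p.2 ∈ (insert j W)ᶜ ∧ p.1 ∈ colN G p.2 with hE
  set pairs : (Fin n → Fin n → Bool) → Fin n → Finset (Fin n × Fin n) :=
    fun G v => (E G).filter fun p =>
      p.1 ∉ U ∧ G p.1 j = false ∧ G v p.2 = false with hpairsdef
  have hWn : W.card + 1 ≤ n := by
    have := card_le_card (subset_univ (insert j W))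
    rwa [card_insert_of_notMem hjW, card_univ, Fintype.card_fin] at this
  -- |E G| for regular G
  have hEcard : ∀ G ∈ Dreg n d, (E G).card = (n - (W.card + 1)) * d := by
    intro G hG
    rw [hE]
    rw [card_pairs_snd ((insert j W)ᶜ) (fun z => colN G z)]
    have hcompl : ((insert j W)ᶜ : Finset (Fin n)).card = n - (W.card + 1) := by
      rw [card_compl, card_insert_of_notMem hjW, Fintype.card_fin]
    rw [Finset.sum_congr rfl (fun z _ => (mem_Dreg.mp hG).2 z), Finset.sum_const,
      smul_eq_mul, hcompl]
  -- forward lower bound on pairs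
  have hpairs : ∀ G ∈ Dreg n d, ∀ v : Fin n, m ≤ (pairs G v).card := by
    intro G hG v
    have hrow := (mem_Dreg.mp hG).1
    have hcol := (mem_Dreg.mp hG).2
    have hB1 : ((E G) \ pairs G v).card ≤ U.card * d + d*d + d*d := by
      have hsub : (E G) \ pairs G v ⊆
          ((Finset.univ.filter fun p : Fin n × Fin n => p.1 ∈ U ∧ p.2 ∈ rowN G p.1)
            ∪ (Finset.univ.filter fun p : Fin n × Fin n =>
                p.1 ∈ colN G j ∧ p.2 ∈ rowN G p.1))
            ∪ (Finset.univ.filter fun p : Fin n × Fin n =>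
                p.2 ∈ rowN G v ∧ p.1 ∈ colN G p.2) := by
        intro p hp
        rw [mem_sdiff, hpairsdef] at hp
        obtain ⟨hpE, hnp⟩ := hp
        rw [mem_filter] at hnp
        push_neg at hnp
        have hGp : G p.1 p.2 = true := by
          have := (mem_filter.mp hpE).2.2
          simpa [colN] using this
        have hrowmem : p.2 ∈ rowN G p.1 := by simp [rowN, hGp]
        by_cases h1 : p.1 ∈ U
        · exact mem_union_left _ (mem_union_left _ (by simp [h1, hrowmem]))
        · by_cases h2 : G p.1 j = true
          · refine mem_union_left _ (mem_union_right _ ?_)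
            simp [colN, h2, hrowmem]
          · have h3 : G v p.2 = true := by
              have := hnp hpE h1
              have h2' : G p.1 j = false := by
                cases hb : G p.1 j
                · rfl
                · exact absurd hb h2
              have := this h2'
              cases hb : G v p.2
              · exact absurd hb this
              · rfl
            refine mem_union_right _ ?_
            have : p.1 ∈ colN G p.2 := (mem_filter.mp hpE).2.2
            simp [rowN, h3, this]
      calc ((E G) \ pairs G v).card ≤ _ := card_le_card hsub
      _ ≤ _ := card_union_le _ _
      _ ≤ U.card * d + d * d + d*d := by
          gcongr
          · calc _ ≤ _ := card_union_le _ _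
            _ ≤ U.card * d + d * d := by
                gcongr
                · exact card_pairs_fst_le U _ (fun a _ => (hrow a).le)
                · calc _ ≤ (colN G j).card * d :=
                      card_pairs_fst_le _ _ (fun a _ => (hrow a).le)
                  _ = d * d := by rw [hcol j]
          · calc _ ≤ (rowN G v).card * d :=
                card_pairs_snd_le _ _ (fun a _ => (hcol a).le)
            _ = d * d := by rw [hrow v]
    have hsplit : ((E G) \ pairs G v).card + (pairs G v).card = (E G).card :=
      card_sdiff_add_card_eq_card (filter_subset _ _)
    have hEc := hEcard G hG
    have hnd : (n - (W.card + 1)) * d = n * d - (W.card + 1) * d := by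
      rw [Nat.sub_mul]
    omega
  -- moves
  set moves : (Fin n → Fin n → Bool) → Finset (Fin n × Fin n × Fin n) :=
    fun G => Finset.univ.filter fun t : Fin n × Fin n × Fin n =>
      t.1 ∈ colN G j ∩ U ∧ t.2 ∈ pairs G t.1 with hmovesdef
  have hmoves : ∀ G ∈ Ds, s * m ≤ (moves G).card := by
    intro G hG
    rw [hDs, mem_filter] at hG
    have hGreg : G ∈ Dreg n d := (mem_Dcond.mp hG.1).1
    rw [hmovesdef]
    rw [card_pairs_fst (colN G j ∩ U) (fun v => pairs G v)]
    calc s * m = ∑ _v ∈ colN G j ∩ U, m := by rw [Finset.sum_const, smul_eq_mul, hG.2]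
    _ ≤ _ := Finset.sum_le_sum (fun v _ => hpairs G hGreg v)
  set targets : (Fin n → Fin n → Bool) → Finset (Fin n × Fin n × Fin n) :=
    fun G' => Finset.univ.filter fun t : Fin n × Fin n × Fin n =>
      t.1 ∈ U ∧ t.2 ∈ (colN G' j) ×ˢ (rowN G' t.1) with htargetsdef
  have htargets : ∀ G' ∈ Dreg n d, (targets G').card ≤ U.card * (d*d) := by
    intro G' hG'
    rw [htargetsdef]
    exact card_pairs_fst_le U (fun x => (colN G' j) ×ˢ (rowN G' x))
      (fun v _ => by rw [card_product, (mem_Dreg.mp hG').2 j, (mem_Dreg.mp hG').1 v])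
  -- the two sigma sets
  set P := Ds.sigma moves with hP
  set Q := Ds'.sigma targets with hQ
  have hPcard : Ds.card * (s * m) ≤ P.card := by
    rw [hP, card_sigma]
    calc Ds.card * (s*m) = ∑ _G ∈ Ds, s * m := by rw [Finset.sum_const, smul_eq_mul]
    _ ≤ _ := Finset.sum_le_sum hmoves
  have hQcard : Q.card ≤ Ds'.card * (U.card * (d*d)) := by
    rw [hQ, card_sigma]
    calc ∑ G' ∈ Ds', (targets G').card ≤ ∑ _G' ∈ Ds', U.card * (d*d) := by
          apply Finset.sum_le_sum
          intro G' hG'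
          rw [hDs', mem_filter] at hG'
          exact htargets G' (mem_Dcond.mp hG'.1).1
    _ = _ := by rw [Finset.sum_const, smul_eq_mul]
  -- the facts provided by membership in P
  have hfacts : ∀ q : (Σ _ : Fin n → Fin n → Bool, Fin n × Fin n × Fin n), q ∈ P →
      q.1 ∈ Ds ∧ q.2.1 ∈ U ∧ q.2.1 ≠ q.2.2.1 ∧ q.2.2.2 ≠ j ∧ q.2.2.2 ∉ W ∧
        q.1 q.2.1 j = true ∧ q.1 q.2.2.1 j = false ∧
        q.1 q.2.2.1 q.2.2.2 = true ∧ q.1 q.2.1 q.2.2.2 = false ∧ q.2.2.1 ∉ U := by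
    rintro ⟨G, v, w, z⟩ hq
    rw [hP, mem_sigma] at hq
    obtain ⟨hGDs, hmv⟩ := hq
    rw [hmovesdef, mem_filter] at hmv
    obtain ⟨-, hv, hwz⟩ := hmv
    rw [hpairsdef, mem_filter] at hwz
    obtain ⟨hwzE, hwU, hwj, hvz⟩ := hwz
    rw [hE, mem_filter] at hwzE
    obtain ⟨-, hzins, hwcol⟩ := hwzE
    simp only [mem_compl, mem_insert, not_or] at hzins
    have hvcol : v ∈ colN G j ∩ U := hv
    rw [mem_inter] at hvcol
    refine ⟨hGDs, hvcol.2, ?_, hzins.1, hzins.2, ?_, hwj, ?_, hvz, hwU⟩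
    · intro h; exact hwU (h ▸ hvcol.2)
    · simpa [colN] using hvcol.1
    · simpa [colN] using hwcol
  -- the switching map
  have hmapsto : ∀ q ∈ P,
      (⟨swG q.1 q.2.1 q.2.2.1 q.2.2.2 j, q.2⟩ :
        Σ _ : Fin n → Fin n → Bool, Fin n × Fin n × Fin n) ∈ Q := by
    rintro ⟨G, v, w, z⟩ hq
    obtain ⟨hGDs, hvU, hvw, hzj, hzW, hvj, hwj, hwz, hvz, hwU⟩ := hfacts _ hq
    dsimp only at hGDs hvU hvw hzj hzW hvj hwj hwz hvz hwU
    rw [hDs, mem_filter] at hGDs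
    obtain ⟨hGD, hcount⟩ := hGDs
    rw [hD, mem_Dcond] at hGD
    obtain ⟨hGreg, hGF⟩ := hGD
    have hrow := (mem_Dreg.mp hGreg).1
    have hcol := (mem_Dreg.mp hGreg).2
    set G' := swG G v w z j with hG'
    have hjmem : j ∈ rowN G v := by simp [rowN, hvj]
    have hzNmem : z ∉ rowN G v := by simp [rowN, hvz]
    have hzmem : z ∈ rowN G w := by simp [rowN, hwz]
    have hjNmem : j ∉ rowN G w := by simp [rowN, hwj]
    have hvcol : v ∈ colN G j := by simp [colN, hvj]
    have hwNcol : w ∉ colN G j := by simp [colN, hwj]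
    have hwcol : w ∈ colN G z := by simp [colN, hwz]
    have hvNcol : v ∉ colN G z := by simp [colN, hvz]
    have hG'reg : G' ∈ Dreg n d := by
      rw [mem_Dreg]
      constructor
      · intro a
        by_cases hav : a = v
        · subst hav
          rw [hG', swG_rowN_v hvw hzj, card_insert_erase hjmem hzNmem, hrow]
        · by_cases haw : a = w
          · subst haw
            rw [hG', swG_rowN_w hvw hzj, card_insert_erase hzmem hjNmem, hrow]
          · rw [hG', swG_rowN_other hav haw, hrow]
      · intro c
        by_cases hcj : c = j
        · subst hcj
          rw [hG', swG_colN_j hvw, card_insert_erase hvcol hwNcol, hcol]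
        · by_cases hcz : c = z
          · subst hcz
            rw [hG', swG_colN_z hvw hzj, card_insert_erase hwcol hvNcol, hcol]
          · rw [hG', swG_colN_other hcj hcz, hcol]
    have hG'F : (Finset.univ.filter fun p : Fin n × Fin n =>
        G' p.1 p.2 = true ∧ p.2 ∈ W) = F := by
      rw [← hGF]
      apply Finset.filter_congr
      intro p _
      by_cases hpW : p.2 ∈ W
      · have h1 : p.2 ≠ j := fun h => hjW (h ▸ hpW)
        have h2 : p.2 ≠ z := fun h => hzW (h ▸ hpW)
        rw [hG', swG_other h1 h2]
      · simp [hpW]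
    have hG'count : (colN G' j ∩ U).card = s - 1 := by
      have h1 : colN G' j ∩ U = (colN G j ∩ U).erase v := by
        rw [hG', swG_colN_j hvw]
        ext a
        simp only [mem_inter, mem_insert, mem_erase]
        constructor
        · rintro ⟨h2 | h2, h3⟩
          · exact absurd (h2 ▸ h3) hwU
          · exact ⟨h2.1, h2.2, h3⟩
        · rintro ⟨h2, h3, h4⟩
          exact ⟨Or.inr ⟨h2, h3⟩, h4⟩
      rw [h1, card_erase_of_mem (by simp [mem_inter, hvcol, hvU]), hcount]
    rw [hQ, mem_sigma]
    constructor
    · rw [hDs', mem_filter, hD, mem_Dcond]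
      exact ⟨⟨hG'reg, hG'F⟩, hG'count⟩
    · rw [htargetsdef, mem_filter]
      refine ⟨mem_univ _, hvU, ?_⟩
      rw [mem_product]
      constructor
      · simp only [colN, mem_filter, mem_univ, true_and]
        exact swG_wj hvw
      · simp only [rowN, mem_filter, mem_univ, true_and]
        exact swG_vz hvw hzj
  have hinj : Set.InjOn (fun q : Σ _ : Fin n → Fin n → Bool, Fin n × Fin n × Fin n =>
      (⟨swG q.1 q.2.1 q.2.2.1 q.2.2.2 j, q.2⟩ :
        Σ _ : Fin n → Fin n → Bool, Fin n × Fin n × Fin n)) ↑P := by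
    rintro ⟨G1, v1, w1, z1⟩ hq1 ⟨G2, v2, w2, z2⟩ hq2 heq
    obtain ⟨-, hvU1, hvw1, hzj1, -, hvj1, hwj1, hwz1, hvz1, -⟩ :=
      hfacts _ (Finset.mem_coe.mp hq1)
    obtain ⟨-, hvU2, hvw2, hzj2, -, hvj2, hwj2, hwz2, hvz2, -⟩ :=
      hfacts _ (Finset.mem_coe.mp hq2)
    dsimp only at hvU1 hvw1 hzj1 hvj1 hwj1 hwz1 hvz1 hvU2 hvw2 hzj2 hvj2 hwj2 hwz2 hvz2
    simp only [Sigma.mk.inj_iff, heq_eq_eq, Prod.mk.injEq] at heq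
    obtain ⟨hGeq, hv, hw, hz⟩ := heq
    subst hv; subst hw; subst hz
    have h1 : G1 = G2 := by
      have e1 := swG_swG hvw1 hzj1 hvj1 hwj1 hwz1 hvz1
      have e2 := swG_swG hvw2 hzj2 hvj2 hwj2 hwz2 hvz2
      rw [← e1, ← e2, hGeq]
    rw [h1]
  have hPQ : P.card ≤ Q.card := Finset.card_le_card_of_injOn _ hmapsto hinj
  calc s * m * Ds.card = Ds.card * (s * m) := by ring
  _ ≤ P.card := hPcard
  _ ≤ Q.card := hPQ
  _ ≤ Ds'.card * (U.card * (d*d)) := hQcard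
  _ = U.card * (d*d) * Ds'.card := by ring


lemma fact_lower : ∀ s : ℕ, 1 ≤ s →
    Real.exp 1 * (s:ℝ)^s ≤ (s.factorial : ℝ) * (Real.exp 1)^s := by
  intro s
  induction s with
  | zero => intro h; omega
  | succ t ih =>
    intro _
    rcases Nat.eq_zero_or_pos t with ht | ht
    · subst ht; simp
    · have iht := ih ht
      have htR : (1:ℝ) ≤ (t:ℝ) := by exact_mod_cast ht
      have ht0 : (0:ℝ) < t := by linarith
      have key : ((t:ℝ)+1)^t ≤ Real.exp 1 * (t:ℝ)^t := by
        have h1 : (1 : ℝ) + 1/t ≤ Real.exp (1/t) := by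
          have := Real.add_one_le_exp (1/(t:ℝ)); linarith
        have h2 : ((1:ℝ) + 1/t)^t ≤ (Real.exp (1/t))^t := by
          apply pow_le_pow_left₀ (by positivity) h1
        have h3 : (Real.exp (1/t))^t = Real.exp 1 := by
          rw [← Real.exp_nat_mul]
          congr 1
          field_simp
        have h4 : ((t:ℝ)+1)^t = (t:ℝ)^t * ((1:ℝ)+1/t)^t := by
          rw [← mul_pow]
          congr 1
          field_simp
        rw [h4]
        calc (t:ℝ)^t * ((1:ℝ)+1/t)^t ≤ (t:ℝ)^t * Real.exp 1 := by
              apply mul_le_mul_of_nonneg_left (h3 ▸ h2) (by positivity)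
        _ = Real.exp 1 * (t:ℝ)^t := by ring
      have e0 : (0:ℝ) < Real.exp 1 := Real.exp_pos 1
      have tp : (0:ℝ) ≤ (t:ℝ)+1 := by positivity
      push_cast
      calc Real.exp 1 * ((t:ℝ)+1)^(t+1)
          = ((t:ℝ)+1) * (Real.exp 1 * ((t:ℝ)+1)^t) := by ring
      _ ≤ ((t:ℝ)+1) * (Real.exp 1 * (Real.exp 1 * (t:ℝ)^t)) := by
          apply mul_le_mul_of_nonneg_left _ tp
          exact mul_le_mul_of_nonneg_left key e0.le
      _ ≤ ((t:ℝ)+1) * (Real.exp 1 * ((t.factorial:ℝ) * (Real.exp 1)^t)) := by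
          apply mul_le_mul_of_nonneg_left _ tp
          exact mul_le_mul_of_nonneg_left iht e0.le
      _ = ((t+1).factorial : ℝ) * (Real.exp 1)^(t+1) := by
          rw [Nat.factorial_succ]
          push_cast
          ring



lemma Dcond_mem_F {d : ℕ} {W : Finset (Fin n)} {F : Finset (Fin n × Fin n)}
    {G : Fin n → Fin n → Bool} (hG : G ∈ Dcond n d W F) {v i : Fin n} (hi : i ∈ W) :
    (v, i) ∈ F ↔ G v i = true := by
  rw [mem_Dcond] at hG
  rw [← hG.2]
  simp [hi]

lemma mem_GammaSet {d : ℕ} {δ : ℝ} {S J : Finset (Fin n)} {G : Fin n → Fin n → Bool} :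
    G ∈ GammaSet n d δ S J ↔ G ∈ Dreg n d ∧ ∀ j ∈ J,
      δ * d ≤ ((Finset.univ.filter fun v : Fin n =>
        ∃ i ∈ S, i < j ∧ G v i = true ∧ G v j = true).card : ℝ) := by
  rw [GammaSet]; exact mem_filter

lemma GammaSet_mono {d : ℕ} {δ : ℝ} {S J J' : Finset (Fin n)} (h : J' ⊆ J) :
    GammaSet n d δ S J ⊆ GammaSet n d δ S J' := fun G hG =>
  mem_GammaSet.mpr ⟨(mem_GammaSet.mp hG).1, fun j hj => (mem_GammaSet.mp hG).2 j (h hj)⟩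

lemma Dcond_col_eq {d : ℕ} {W : Finset (Fin n)} {F : Finset (Fin n × Fin n)}
    {G G0 : Fin n → Fin n → Bool} (hG : G ∈ Dcond n d W F) (hG0 : G0 ∈ Dcond n d W F)
    {v c : Fin n} (hc : c ∈ W) : G v c = G0 v c := by
  have h1 := (Dcond_mem_F hG hc (v := v))
  have h2 := (Dcond_mem_F hG0 hc (v := v))
  by_cases hb : G v c = true
  · rw [hb, h2.mp (h1.mpr hb)]
  · have hb0 : ¬ G0 v c = true := fun h => hb (h1.mp (h2.mpr h))
    rw [Bool.not_eq_true] at hb hb0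
    rw [hb, hb0]

set_option maxHeartbeats 2000000 in
/-- Lemma 2.3: the per-vertex bound within a conditioned class. -/
lemma L23 (n d k : ℕ) (δ : ℝ) (W : Finset (Fin n)) (F : Finset (Fin n × Fin n))
    (j : Fin n) (U : Finset (Fin n))
    (hδ0 : 0 < δ) (hδ1 : δ < 1) (hd2 : 2 ≤ d) (hdn : (d:ℝ) ≤ n/12)
    (hk1 : 1 ≤ k) (hk : (k:ℝ) ≤ δ*n/(4*Real.exp 1*d))
    (hjW : j ∉ W) (hUk : (U.card : ℝ) ≤ k*d)
    (hWcard : (W.card:ℝ) ≤ (k:ℝ) - 1 + (n:ℝ)/8) :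
    (((Dcond n d W F).filter fun G => δ*d ≤ ((colN G j ∩ U).card : ℝ)).card : ℝ)
      ≤ (2*Real.exp 1*k*d/(δ*n)) ^ (δ*(d:ℝ)) * ((Dcond n d W F).card : ℝ) := by
  classical
  have e1 : (2.7:ℝ) < Real.exp 1 := by
    have := Real.exp_one_gt_d9; linarith
  have e0 : (0:ℝ) < Real.exp 1 := by linarith
  have hdR : (2:ℝ) ≤ (d:ℝ) := by exact_mod_cast hd2
  have hd0 : (0:ℝ) < d := by linarith
  have hkR : (1:ℝ) ≤ (k:ℝ) := by exact_mod_cast hk1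
  have hnR : (24:ℝ) ≤ (n:ℝ) := by linarith
  have hn0 : (0:ℝ) < n := by linarith
  have hkd : (k:ℝ)*(4*Real.exp 1*d) ≤ δ*n := by
    rw [div_eq_mul_inv] at hk
    have h4ed : (0:ℝ) < 4*Real.exp 1*d := by positivity
    calc (k:ℝ)*(4*Real.exp 1*d) ≤ (δ*n*(4*Real.exp 1*d)⁻¹)*(4*Real.exp 1*d) :=
          mul_le_mul_of_nonneg_right hk h4ed.le
    _ = δ*n := by field_simp
  have hkd0 : (0:ℝ) < (k:ℝ)*d := by positivity
  have hfkd : 10.8*((k:ℝ)*d) ≤ (n:ℝ) := by nlinarith [hkd0, mul_pos hn0 hδ0]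
  set m := (n*d+1)/2 with hmdef
  have hm2 : (n*d:ℝ) ≤ 2*m := by
    have : n*d ≤ 2*((n*d+1)/2) := by omega
    exact_mod_cast this
  have hm1 : 2*(m:ℝ) ≤ (n:ℝ)*d+1 := by
    have : 2*((n*d+1)/2) ≤ n*d+1 := by omega
    exact_mod_cast this
  have h2n : (n:ℝ)*2 ≤ (n:ℝ)*d := mul_le_mul_of_nonneg_left hdR hn0.le
  have hnd48 : (48:ℝ) ≤ (n:ℝ)*d := by linarith
  have hmpos : (0:ℝ) < m := by linarith
  have hmNat : m + U.card*d + 2*(d*d) + (W.card+1)*d ≤ n*d := by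
    have g0 : 10.8*((k:ℝ)*d)*d ≤ (n:ℝ)*d := mul_le_mul_of_nonneg_right hfkd hd0.le
    have gU : (U.card:ℝ)*d ≤ ((k:ℝ)*d)*d := mul_le_mul_of_nonneg_right hUk hd0.le
    have g2 : 12*(d:ℝ)*d ≤ (n:ℝ)*d := by
      have h12 : 12*(d:ℝ) ≤ n := by linarith
      calc 12*(d:ℝ)*d = (12*(d:ℝ))*d := by ring
      _ ≤ (n:ℝ)*d := mul_le_mul_of_nonneg_right h12 hd0.le
    have gW : ((W.card:ℝ)+1)*d ≤ ((k:ℝ)+(n:ℝ)/8)*d :=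
      mul_le_mul_of_nonneg_right (by linarith) hd0.le
    have gWexp : ((k:ℝ)+(n:ℝ)/8)*d = (k:ℝ)*d + (n:ℝ)*d/8 := by ring
    have g3 : 21.6*((k:ℝ)*d) ≤ (n:ℝ)*d := by linarith
    have : (m:ℝ) + (U.card:ℝ)*d + 2*((d:ℝ)*d) + ((W.card:ℝ)+1)*d ≤ (n:ℝ)*d := by
      nlinarith [g0, gU, g2, gW, g3, gWexp, hm1]
    exact_mod_cast this
  set ρ := 2*Real.exp 1*(k:ℝ)*d/(δ*n) with hρdef
  have hρ0 : (0:ℝ) < ρ := by positivity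
  have hρhalf : ρ ≤ 1/2 := by
    rw [hρdef, div_le_iff₀ (by positivity)]
    nlinarith [hkd]
  set D := Dcond n d W F with hDdef
  set a : ℕ → ℕ := fun s => (D.filter fun G => (colN G j ∩ U).card = s).card with hadef
  set T := (D.card : ℝ) with hTdef
  have hT0 : (0:ℝ) ≤ T := by positivity
  have hrec : ∀ s : ℕ, 1 ≤ s → s * m * a s ≤ U.card * (d*d) * a (s-1) :=
    fun s hs => switching n d W F j hjW U s m hs hmNat
  set X := (U.card:ℝ)*((d:ℝ)*d)/m with hXdef
  have hX0 : (0:ℝ) ≤ X := by positivity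
  have hchain : ∀ s : ℕ, (a s : ℝ) ≤ X^s/(s.factorial : ℝ) * T := by
    intro s
    induction s with
    | zero =>
      simp only [pow_zero, Nat.factorial_zero, Nat.cast_one]
      rw [hadef, hTdef]
      simp only [one_div, inv_one, one_mul]
      have := card_le_card (filter_subset (fun G => (colN G j ∩ U).card = 0) D)
      exact_mod_cast this
    | succ t ih =>
      have h := hrec (t+1) (Nat.le_add_left 1 t)
      simp only [Nat.add_sub_cancel] at h
      have hcast : ((t:ℝ)+1) * m * (a (t+1) : ℝ) ≤ (U.card:ℝ) * ((d:ℝ)*d) * (a t : ℝ) := by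
        exact_mod_cast h
      have htm : (0:ℝ) < ((t:ℝ)+1) * m := by positivity
      have step1 : (a (t+1) : ℝ) ≤ X/((t:ℝ)+1) * (a t : ℝ) := by
        rw [div_mul_eq_mul_div, le_div_iff₀ (by positivity), hXdef]
        calc (a (t+1):ℝ) * ((t:ℝ)+1) = (((t:ℝ)+1) * m * (a (t+1):ℝ))/m := by
              field_simp
        _ ≤ ((U.card:ℝ) * ((d:ℝ)*d) * (a t : ℝ))/m :=
              (div_le_div_iff_of_pos_right hmpos).mpr hcast
        _ = (U.card:ℝ)*((d:ℝ)*d)/m * (a t:ℝ) := by ring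
      calc (a (t+1) : ℝ) ≤ X/((t:ℝ)+1) * (a t : ℝ) := step1
      _ ≤ X/((t:ℝ)+1) * (X^t/(t.factorial:ℝ) * T) := by
            apply mul_le_mul_of_nonneg_left ih (by positivity)
      _ = X^(t+1)/((t+1).factorial : ℝ) * T := by
            rw [Nat.factorial_succ]
            push_cast
            field_simp
            ring
  set s0 := ⌈δ*(d:ℝ)⌉₊ with hs0def
  have hδd0 : (0:ℝ) < δ*d := by positivity
  have hs01 : 1 ≤ s0 := by
    rw [hs0def]
    exact Nat.one_le_iff_ne_zero.mpr (by positivity)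
  have hs0ge : δ*(d:ℝ) ≤ s0 := Nat.le_ceil _
  -- decompose the bad set
  have hBad : ((D.filter fun G => δ*d ≤ ((colN G j ∩ U).card : ℝ)).card : ℝ)
      = ∑ s ∈ Finset.Icc s0 n, (a s : ℝ) := by
    have h1 : (D.filter fun G => δ*d ≤ ((colN G j ∩ U).card : ℝ)).card
        = ∑ s ∈ Finset.Icc s0 n,
            ((D.filter fun G => δ*d ≤ ((colN G j ∩ U).card : ℝ)).filter
              (fun G => (colN G j ∩ U).card = s)).card := by
      apply Finset.card_eq_sum_card_fiberwise
      intro G hG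
      rw [Finset.mem_coe, mem_filter] at hG
      rw [Finset.mem_coe, mem_Icc]
      constructor
      · rw [hs0def]; exact Nat.ceil_le.mpr hG.2
      · calc (colN G j ∩ U).card ≤ (Finset.univ : Finset (Fin n)).card :=
              card_le_univ _
        _ = n := by rw [card_univ, Fintype.card_fin]
    rw [h1]
    push_cast
    apply Finset.sum_congr rfl
    intro s hsI
    rw [mem_Icc] at hsI
    congr 1
    rw [hadef]
    congr 1
    ext G
    simp only [mem_filter]
    constructor
    · rintro ⟨⟨h1', -⟩, h3⟩; exact ⟨h1', h3⟩
    · rintro ⟨h1', h3⟩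
      refine ⟨⟨h1', ?_⟩, h3⟩
      rw [h3]
      calc δ*(d:ℝ) ≤ s0 := hs0ge
      _ ≤ s := by exact_mod_cast hsI.1
  -- term bound
  have hterm : ∀ s ∈ Finset.Icc s0 n, X^s/(s.factorial:ℝ) ≤ ρ^s/Real.exp 1 := by
    intro s hsI
    rw [mem_Icc] at hsI
    have hs1 : 1 ≤ s := le_trans hs01 hsI.1
    have hsR : (1:ℝ) ≤ (s:ℝ) := by exact_mod_cast hs1
    have hsδ : δ*(d:ℝ) ≤ (s:ℝ) := le_trans hs0ge (by exact_mod_cast hsI.1)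
    have hXx : X ≤ 2*(k:ℝ)*d*d/n := by
      rw [hXdef]
      rw [div_le_div_iff₀ hmpos hn0]
      calc (U.card:ℝ)*((d:ℝ)*d)*n ≤ ((k:ℝ)*d)*((d:ℝ)*d)*n := by
            apply mul_le_mul_of_nonneg_right _ hn0.le
            exact mul_le_mul_of_nonneg_right hUk (by positivity)
      _ = ((k:ℝ)*d*d)*(n*d) := by ring
      _ ≤ ((k:ℝ)*d*d)*(2*m) := by
            apply mul_le_mul_of_nonneg_left hm2 (by positivity)
      _ = 2*(k:ℝ)*d*d*m := by ring
    have hXρ : Real.exp 1 * X ≤ ρ * s := by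
      have hid : Real.exp 1 * (2*(k:ℝ)*d*d/n) = ρ * (δ*d) := by
        rw [hρdef]
        field_simp
      calc Real.exp 1 * X ≤ Real.exp 1 * (2*(k:ℝ)*d*d/n) :=
            mul_le_mul_of_nonneg_left hXx e0.le
      _ = ρ * (δ*d) := hid
      _ ≤ ρ * s := mul_le_mul_of_nonneg_left hsδ hρ0.le
    have hXs : X ≤ ρ*(s:ℝ)/Real.exp 1 := by
      rw [le_div_iff₀ e0]
      linarith [hXρ]
    have h5 : X^s ≤ (ρ*(s:ℝ)/Real.exp 1)^s := pow_le_pow_left₀ hX0 hXs s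
    have hfact := fact_lower s hs1
    have hsfac0 : (0:ℝ) < (s.factorial : ℝ) := by
      exact_mod_cast Nat.factorial_pos s
    have h8 : ρ^s * (Real.exp 1 * (s:ℝ)^s) ≤ ρ^s * ((s.factorial:ℝ) * (Real.exp 1)^s) :=
      mul_le_mul_of_nonneg_left hfact (by positivity)
    have hes : (0:ℝ) < (Real.exp 1)^s := by positivity
    rw [div_le_div_iff₀ hsfac0 e0]
    calc X^s * Real.exp 1 ≤ (ρ*(s:ℝ)/Real.exp 1)^s * Real.exp 1 :=
          mul_le_mul_of_nonneg_right h5 e0.le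
    _ = ρ^s * (Real.exp 1 * (s:ℝ)^s) / (Real.exp 1)^s := by
          rw [div_pow, mul_pow]
          field_simp
    _ ≤ ρ^s * ((s.factorial:ℝ) * (Real.exp 1)^s) / (Real.exp 1)^s :=
          (div_le_div_iff_of_pos_right hes).mpr h8
    _ = ρ^s * (s.factorial:ℝ) := by
          field_simp
  -- geometric sum bound
  have hsum : ∑ s ∈ Finset.Icc s0 n, ρ^s ≤ 2*ρ^s0 := by
    have hρs0 : (0:ℝ) ≤ ρ^s0 := by positivity
    rcases le_or_gt s0 (n+1) with hcase | hcase
    · rw [← Finset.Ico_add_one_right_eq_Icc, geom_sum_Ico (by intro h; rw [h] at hρhalf; linarith : ρ ≠ 1) hcase]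
      have hρn1 : (0:ℝ) ≤ ρ^(n+1) := by positivity
      have h1ρ : (0:ℝ) < 1 - ρ := by linarith
      rw [div_le_iff_of_neg (by linarith : ρ - 1 < 0)]
      nlinarith [mul_le_mul_of_nonneg_left hρhalf hρs0]
    · rw [Finset.Icc_eq_empty (by omega)]
      simp only [Finset.sum_empty]
      positivity
  -- assemble
  have hfinal : ((D.filter fun G => δ*d ≤ ((colN G j ∩ U).card : ℝ)).card : ℝ)
      ≤ (2*ρ^s0/Real.exp 1) * T := by
    rw [hBad]
    calc ∑ s ∈ Finset.Icc s0 n, (a s : ℝ)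
        ≤ ∑ s ∈ Finset.Icc s0 n, X^s/(s.factorial:ℝ) * T :=
          Finset.sum_le_sum (fun s _ => hchain s)
    _ ≤ ∑ s ∈ Finset.Icc s0 n, ρ^s/Real.exp 1 * T := by
          apply Finset.sum_le_sum
          intro s hsI
          exact mul_le_mul_of_nonneg_right (hterm s hsI) hT0
    _ = (∑ s ∈ Finset.Icc s0 n, ρ^s) / Real.exp 1 * T := by
          rw [Finset.sum_div, Finset.sum_mul]
    _ ≤ (2*ρ^s0) / Real.exp 1 * T := by
          apply mul_le_mul_of_nonneg_right _ hT0
          exact (div_le_div_iff_of_pos_right e0).mpr hsum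
    _ = (2*ρ^s0/Real.exp 1) * T := by ring
  have hrpow : 2*ρ^s0/Real.exp 1 ≤ ρ ^ (δ*(d:ℝ)) := by
    have h1 : ρ^s0 = ρ ^ ((s0:ℝ)) := by
      rw [← Real.rpow_natCast]
    have h2 : ρ ^ ((s0:ℝ)) ≤ ρ ^ (δ*(d:ℝ)) :=
      Real.rpow_le_rpow_of_exponent_ge hρ0 (by linarith) hs0ge
    have h3 : 2/Real.exp 1 ≤ 1 := by
      rw [div_le_one e0]; linarith
    have h4 : (0:ℝ) ≤ ρ^s0 := by positivity
    calc 2*ρ^s0/Real.exp 1 = (2/Real.exp 1) * ρ^s0 := by ring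
    _ ≤ 1 * ρ^s0 := mul_le_mul_of_nonneg_right h3 h4
    _ = ρ^s0 := by ring
    _ ≤ ρ ^ (δ*(d:ℝ)) := h1 ▸ h2
  calc ((D.filter fun G => δ*d ≤ ((colN G j ∩ U).card : ℝ)).card : ℝ)
      ≤ (2*ρ^s0/Real.exp 1) * T := hfinal
  _ ≤ ρ ^ (δ*(d:ℝ)) * T := mul_le_mul_of_nonneg_right hrpow hT0


end CorAl

open CorAl

/-- Corollary 2.4 of the paper. -/
theorem cor_al (n d k ℓ : ℕ) (δ : ℝ) (H : Finset (Fin n × Fin n))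
    (I S J : Finset (Fin n))
    (hδ0 : 0 < δ) (hδ1 : δ < 1)
    (hd2 : 2 ≤ d) (hdn : (d : ℝ) ≤ n / 12)
    (hk1 : 1 ≤ k) (hk : (k : ℝ) ≤ δ * n / (4 * Real.exp 1 * d))
    (hℓ : ℓ ≤ k)
    (hIcard : (I.card : ℝ) ≤ n / 8)
    (hJS : J ⊆ S) (hSI : S ⊆ Iᶜ) (hS : S.card = k) (hJ : J.card = ℓ) :
    ((GammaSet n d δ S J ∩ Dcond n d I H).card : ℝ)
      ≤ ((2 * Real.exp 1 * k * d / (δ * n)) ^ (δ * d)) ^ ℓ *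
        ((Dcond n d I H).card : ℝ) := by
  classical
  induction ℓ generalizing J with
  | zero =>
    rw [pow_zero, one_mul]
    exact_mod_cast card_le_card (inter_subset_right)
  | succ t ih =>
    have hJne : J.Nonempty := by
      rw [← Finset.card_pos, hJ]; omega
    set j := J.max' hJne with hjdef
    have hjJ : j ∈ J := J.max'_mem hJne
    set J' := J.erase j with hJ'def
    have hjS : j ∈ S := hJS hjJ
    have hJ'card : J'.card = t := by rw [hJ'def, card_erase_of_mem hjJ, hJ]; omega
    have hJ'S : J' ⊆ S := fun x hx => hJS (mem_of_mem_erase hx)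
    have hjI : j ∉ I := by simpa using hSI hjS
    set W := (S.erase j) ∪ I with hWdef
    have hjW : j ∉ W := by
      rw [hWdef, mem_union]
      rintro (h | h)
      · exact (notMem_erase _ _) h
      · exact hjI h
    have hIW : I ⊆ W := subset_union_right
    have hiW : ∀ i ∈ S, i ≠ j → i ∈ W := fun i hi hij =>
      mem_union_left _ (mem_erase.mpr ⟨hij, hi⟩)
    have hWcard : (W.card : ℝ) ≤ (k:ℝ) - 1 + (n:ℝ)/8 := by
      have h1 : W.card ≤ (S.erase j).card + I.card := card_union_le _ _
      have h2' : ((S.erase j).card : ℝ) = (k:ℝ) - 1 := by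
        rw [card_erase_of_mem hjS, hS, Nat.cast_sub hk1, Nat.cast_one]
      have h1' : (W.card : ℝ) ≤ ((S.erase j).card : ℝ) + I.card := by exact_mod_cast h1
      linarith [hIcard]
    set f : (Fin n → Fin n → Bool) → Finset (Fin n × Fin n) :=
      fun G => Finset.univ.filter (fun p : Fin n × Fin n => G p.1 p.2 = true ∧ p.2 ∈ W)
      with hfdef
    have hfD : ∀ G, G ∈ Dreg n d → G ∈ Dcond n d W (f G) := fun G hG =>
      mem_Dcond.mpr ⟨hG, rfl⟩
    have hfconst : ∀ (Fc : Finset (Fin n × Fin n)), ∀ G ∈ Dcond n d W Fc, f G = Fc :=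
      fun Fc G hG => (mem_Dcond.mp hG).2
    set M := GammaSet n d δ S J' ∩ Dcond n d I H with hMdef
    set Bad := GammaSet n d δ S J ∩ Dcond n d I H with hBaddef
    set T := M.image f with hTdef
    have hBadM : Bad ⊆ M := by
      rw [hBaddef, hMdef]
      exact inter_subset_inter (GammaSet_mono (fun x hx => mem_of_mem_erase (hJ'def ▸ hx)))
        Subset.rfl
    have hclassM : ∀ Fc ∈ T, Dcond n d W Fc ⊆ M := by
      intro Fc hFc G hG
      obtain ⟨G0, hG0M, hG0F⟩ := mem_image.mp hFc
      obtain ⟨hG0Γ, hG0DIH⟩ := mem_inter.mp hG0M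
      have hG0reg : G0 ∈ Dreg n d := (mem_Dcond.mp hG0DIH).1
      have hG0W : G0 ∈ Dcond n d W Fc := by rw [← hG0F]; exact hfD G0 hG0reg
      have hGreg : G ∈ Dreg n d := (mem_Dcond.mp hG).1
      have hcols : ∀ (v c : Fin n), c ∈ W → G v c = G0 v c := fun v c hc =>
        Dcond_col_eq hG hG0W hc
      rw [hMdef, mem_inter]
      constructor
      · rw [mem_GammaSet]
        refine ⟨hGreg, ?_⟩
        intro j' hj'
        have hj'J : j' ∈ J := mem_of_mem_erase (hJ'def ▸ hj')
        have hj'ne : j' ≠ j := (mem_erase.mp (hJ'def ▸ hj')).1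
        have hj'lt : j' < j := lt_of_le_of_ne (J.le_max' j' hj'J) hj'ne
        have hj'W : j' ∈ W := hiW j' (hJ'S hj') hj'ne
        have hset : (Finset.univ.filter fun v : Fin n =>
              ∃ i ∈ S, i < j' ∧ G v i = true ∧ G v j' = true)
            = (Finset.univ.filter fun v : Fin n =>
              ∃ i ∈ S, i < j' ∧ G0 v i = true ∧ G0 v j' = true) := by
          apply filter_congr
          intro v _
          constructor
          · rintro ⟨i, hiS, hij', h1, h2⟩
            have hiW' : i ∈ W := hiW i hiS (ne_of_lt (lt_trans hij' hj'lt))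
            exact ⟨i, hiS, hij', by rw [← hcols v i hiW']; exact h1,
              by rw [← hcols v j' hj'W]; exact h2⟩
          · rintro ⟨i, hiS, hij', h1, h2⟩
            have hiW' : i ∈ W := hiW i hiS (ne_of_lt (lt_trans hij' hj'lt))
            exact ⟨i, hiS, hij', by rw [hcols v i hiW']; exact h1,
              by rw [hcols v j' hj'W]; exact h2⟩
        rw [hset]
        exact (mem_GammaSet.mp hG0Γ).2 j' hj'
      · rw [mem_Dcond]
        refine ⟨hGreg, ?_⟩
        have hH := (mem_Dcond.mp hG0DIH).2
        rw [← hH]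
        apply filter_congr
        intro p _
        by_cases hpI : p.2 ∈ I
        · rw [hcols p.1 p.2 (hIW hpI)]
        · simp [hpI]
    have hfib1 : Bad.card = ∑ Fc ∈ T, (Bad.filter (fun G => f G = Fc)).card :=
      Finset.card_eq_sum_card_fiberwise (fun G hG => mem_image_of_mem f (hBadM hG))
    have hfib2 : M.card = ∑ Fc ∈ T, (Dcond n d W Fc).card := by
      rw [Finset.card_eq_sum_card_fiberwise (f := f) (t := T)
        (fun G hG => mem_image_of_mem f hG)]
      apply Finset.sum_congr rfl
      intro Fc hFc
      congr 1
      ext G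
      rw [mem_filter]
      constructor
      · rintro ⟨hGM, hGf⟩
        have hGreg : G ∈ Dreg n d := (mem_Dcond.mp (mem_inter.mp hGM).2).1
        rw [← hGf]
        exact hfD G hGreg
      · intro hG
        exact ⟨hclassM Fc hFc hG, hfconst Fc G hG⟩
    have hγ0 : (0:ℝ) ≤ (2 * Real.exp 1 * k * d / (δ * n)) ^ (δ * (d:ℝ)) :=
      Real.rpow_nonneg (by positivity) _
    have hbound : ∀ Fc ∈ T, ((Bad.filter (fun G => f G = Fc)).card : ℝ)
        ≤ (2 * Real.exp 1 * k * d / (δ * n)) ^ (δ * (d:ℝ)) * ((Dcond n d W Fc).card : ℝ) := by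
      intro Fc hFc
      obtain ⟨G0, hG0M, hG0F⟩ := mem_image.mp hFc
      have hG0reg : G0 ∈ Dreg n d := (mem_Dcond.mp (mem_inter.mp hG0M).2).1
      have hG0W : G0 ∈ Dcond n d W Fc := by rw [← hG0F]; exact hfD G0 hG0reg
      set U := Finset.univ.filter (fun v : Fin n => ∃ i, (v,i) ∈ Fc ∧ i ∈ S ∧ i < j)
        with hUdef
      have hUk' : (U.card : ℝ) ≤ (k:ℝ)*d := by
        have hsub : U ⊆ (S.filter (fun i => i < j)).biUnion (fun i => colN G0 i) := by
          intro v hv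
          rw [hUdef, mem_filter] at hv
          obtain ⟨-, i, hiF, hiS, hij⟩ := hv
          have hiW' : i ∈ W := hiW i hiS (ne_of_lt hij)
          have hGvi : G0 v i = true := (Dcond_mem_F hG0W hiW').mp hiF
          exact mem_biUnion.mpr ⟨i, mem_filter.mpr ⟨hiS, hij⟩, by simp [colN, hGvi]⟩
        have h1 : U.card ≤ ∑ i ∈ S.filter (fun i => i < j), (colN G0 i).card :=
          le_trans (card_le_card hsub) (card_biUnion_le)
        rw [Finset.sum_congr rfl (fun i _ => (mem_Dreg.mp hG0reg).2 i),
          Finset.sum_const, smul_eq_mul] at h1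
        have h3 : (S.filter (fun i => i < j)).card ≤ k :=
          hS ▸ card_le_card (filter_subset _ _)
        have h4 : U.card ≤ k * d := le_trans h1 (Nat.mul_le_mul_right d h3)
        exact_mod_cast h4
      have hsubB : Bad.filter (fun G => f G = Fc)
          ⊆ (Dcond n d W Fc).filter (fun G => δ*d ≤ ((colN G j ∩ U).card : ℝ)) := by
        intro G hG
        rw [mem_filter] at hG
        obtain ⟨hGB, hGf⟩ := hG
        obtain ⟨hGΓ, hGD⟩ := mem_inter.mp (hBaddef ▸ hGB)
        have hGreg : G ∈ Dreg n d := (mem_Dcond.mp hGD).1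
        have hGW : G ∈ Dcond n d W Fc := by rw [← hGf]; exact hfD G hGreg
        rw [mem_filter]
        refine ⟨hGW, ?_⟩
        have hΓj := (mem_GammaSet.mp hGΓ).2 j hjJ
        have hset : (Finset.univ.filter fun v : Fin n =>
              ∃ i ∈ S, i < j ∧ G v i = true ∧ G v j = true) = colN G j ∩ U := by
          ext v
          rw [mem_filter, mem_inter, hUdef, mem_filter]
          constructor
          · rintro ⟨hvu, i, hiS, hij, h1, h2⟩
            have hiW' : i ∈ W := hiW i hiS (ne_of_lt hij)
            refine ⟨by simp [colN, h2], hvu, i, (Dcond_mem_F hGW hiW').mpr h1, hiS, hij⟩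
          · rintro ⟨hvcol, hvu, i, hiF, hiS, hij⟩
            have hiW' : i ∈ W := hiW i hiS (ne_of_lt hij)
            have h1 : G v i = true := (Dcond_mem_F hGW hiW').mp hiF
            have h2 : G v j = true := by simpa [colN] using hvcol
            exact ⟨hvu, i, hiS, hij, h1, h2⟩
        rw [hset] at hΓj
        exact hΓj
      calc ((Bad.filter (fun G => f G = Fc)).card : ℝ)
          ≤ (((Dcond n d W Fc).filter
              (fun G => δ*d ≤ ((colN G j ∩ U).card : ℝ))).card : ℝ) := by
            exact_mod_cast card_le_card hsubB
      _ ≤ (2*Real.exp 1*k*d/(δ*n)) ^ (δ*(d:ℝ)) * ((Dcond n d W Fc).card : ℝ) :=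
            L23 n d k δ W Fc j U hδ0 hδ1 hd2 hdn hk1 hk hjW hUk' hWcard
    have hih := ih J' (by omega) hJ'S hJ'card
    calc ((Bad).card : ℝ) = ∑ Fc ∈ T, ((Bad.filter (fun G => f G = Fc)).card : ℝ) := by
          rw [hfib1]; push_cast; rfl
    _ ≤ ∑ Fc ∈ T, (2 * Real.exp 1 * k * d / (δ * n)) ^ (δ * (d:ℝ))
          * ((Dcond n d W Fc).card : ℝ) := Finset.sum_le_sum hbound
    _ = (2 * Real.exp 1 * k * d / (δ * n)) ^ (δ * (d:ℝ))
          * ∑ Fc ∈ T, ((Dcond n d W Fc).card : ℝ) := by rw [Finset.mul_sum]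
    _ = (2 * Real.exp 1 * k * d / (δ * n)) ^ (δ * (d:ℝ)) * (M.card : ℝ) := by
          rw [hfib2]; push_cast; rfl
    _ ≤ (2 * Real.exp 1 * k * d / (δ * n)) ^ (δ * (d:ℝ))
          * (((2 * Real.exp 1 * k * d / (δ * n)) ^ (δ * (d:ℝ)))^t
            * ((Dcond n d I H).card : ℝ)) := mul_le_mul_of_nonneg_left hih hγ0
    _ = ((2 * Real.exp 1 * k * d / (δ * n)) ^ (δ * (d:ℝ)))^(t+1)
          * ((Dcond n d I H).card : ℝ) := by ring
end

section
/- Let ε ∈ (0,1) and 8 ≤ d ≤ ε·n/6. Define Ω²_ε = {M ∈ M_{n,d} : for all distinct i, j ∈ [n], |supp(R_i + R_j)| ≥ 2(1−ε)d}, where R_i denotes the i-th row of M. Then P(Ω²_ε) ≥ 1 − (n²/2)·(ed/(εn))^{εd}. -/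
open Finset
open scoped Classical

/-- `Mnd n d` is the set of `n × n` matrices with `0/1` entries (encoded as `Bool`)
such that every row and every column contains exactly `d` ones. -/
def Mnd (n d : ℕ) : Finset (Fin n → Fin n → Bool) :=
  Finset.univ.filter fun M =>
    (∀ i, (Finset.univ.filter fun j => M i j = true).card = d) ∧
    (∀ j, (Finset.univ.filter fun i => M i j = true).card = d)

/-- The real `0/1` matrix associated to a Bool matrix. -/
def toRealM {n : ℕ} (M : Fin n → Fin n → Bool) : Matrix (Fin n) (Fin n) ℝ :=
  Matrix.of fun i j => if M i j then (1 : ℝ) else 0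

namespace PropDR

variable {n d : ℕ}

/-- support of row `i`. -/
def rowS {n : ℕ} (M : Fin n → Fin n → Bool) (i : Fin n) : Finset (Fin n) :=
  Finset.univ.filter fun k => M i k = true

/-- support of column `k`. -/
def colS {n : ℕ} (M : Fin n → Fin n → Bool) (k : Fin n) : Finset (Fin n) :=
  Finset.univ.filter fun i => M i k = true

lemma mem_Mnd {M : Fin n → Fin n → Bool} :
    M ∈ Mnd n d ↔ (∀ i, (rowS M i).card = d) ∧ (∀ k, (colS M k).card = d) := by
  simp [Mnd, rowS, colS]

/-- the switching operation. -/
def swM {n : ℕ} (M : Fin n → Fin n → Bool) (j i' s k' : Fin n) : Fin n → Fin n → Bool :=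
  fun a b =>
    if a = j then (if b = s then false else if b = k' then true else M a b)
    else if a = i' then (if b = s then true else if b = k' then false else M a b)
    else M a b

section Switch

variable {M : Fin n → Fin n → Bool} {j i' s k' : Fin n}

lemma swM_mem (hM : M ∈ Mnd n d)
    (hjs : M j s = true) (hjk : M j k' = false)
    (his : M i' s = false) (hik : M i' k' = true) :
    swM M j i' s k' ∈ Mnd n d := by
  have hji : j ≠ i' := fun h => by rw [h] at hjs; rw [hjs] at his; exact Bool.noConfusion his
  have hsk : s ≠ k' := fun h => by rw [h] at his; rw [his] at hik; exact Bool.noConfusion hik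
  rw [mem_Mnd] at hM ⊢
  obtain ⟨hr, hc⟩ := hM
  have hdpos : 0 < d := by
    rw [← hr j]; exact Finset.card_pos.mpr ⟨s, by simp [rowS, hjs]⟩
  constructor
  · intro a
    by_cases haj : a = j
    · subst haj
      have he : rowS (swM M a i' s k') a = insert k' ((rowS M a).erase s) := by
        ext b
        by_cases hbs : b = s <;> by_cases hbk : b = k' <;>
          simp_all [rowS, swM]
      rw [he, Finset.card_insert_of_notMem (by simp [rowS, hjk]),
        Finset.card_erase_of_mem (by simp [rowS, hjs]), hr]
      omega
    · by_cases hai : a = i'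
      · subst hai
        have he : rowS (swM M j a s k') a = insert s ((rowS M a).erase k') := by
          ext b
          by_cases hbs : b = s <;> by_cases hbk : b = k' <;>
            simp_all [rowS, swM]
        rw [he, Finset.card_insert_of_notMem (by simp [rowS, his]),
          Finset.card_erase_of_mem (by simp [rowS, hik]), hr]
        omega
      · have he : rowS (swM M j i' s k') a = rowS M a := by
          ext b; simp [rowS, swM, haj, hai]
        rw [he, hr]
  · intro b
    by_cases hbs : b = s
    · subst hbs
      have he : colS (swM M j i' b k') b = insert i' ((colS M b).erase j) := by
        ext a
        by_cases haj : a = j <;> by_cases hai : a = i' <;>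
          simp_all [colS, swM]
      rw [he, Finset.card_insert_of_notMem (by simp [colS, his]),
        Finset.card_erase_of_mem (by simp [colS, hjs]), hc]
      omega
    · by_cases hbk : b = k'
      · subst hbk
        have he : colS (swM M j i' s b) b = insert j ((colS M b).erase i') := by
          ext a
          by_cases haj : a = j <;> by_cases hai : a = i' <;>
            simp_all [colS, swM]
        rw [he, Finset.card_insert_of_notMem (by simp [colS, hjk]),
          Finset.card_erase_of_mem (by simp [colS, hik]), hc]
        omega
      · have he : colS (swM M j i' s k') b = colS M b := by
          ext a; simp [colS, swM, hbs, hbk]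
        rw [he, hc]

lemma swM_row_other (a : Fin n) (haj : a ≠ j) (hai : a ≠ i') :
    swM M j i' s k' a = M a := by
  funext b; simp [swM, haj, hai]

lemma swM_swM (hjs : M j s = true) (hjk : M j k' = false)
    (his : M i' s = false) (hik : M i' k' = true) :
    swM (swM M j i' s k') j i' k' s = M := by
  have hji : j ≠ i' := fun h => by rw [h] at hjs; rw [hjs] at his; exact Bool.noConfusion his
  have hsk : s ≠ k' := fun h => by rw [h] at his; rw [his] at hik; exact Bool.noConfusion hik
  funext a b
  by_cases haj : a = j <;> by_cases hai : a = i' <;>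
    by_cases hbs : b = s <;> by_cases hbk : b = k' <;>
      simp_all [swM]

end Switch

/-- class of matrices with prescribed ones in rows `i` and `j`. -/
def CC (n d : ℕ) (i j : Fin n) (S T : Finset (Fin n)) : Finset (Fin n → Fin n → Bool) :=
  (Mnd n d).filter fun M => (∀ k ∈ S, M i k = true) ∧ (∀ k ∈ T, M j k = true)

lemma forward_count {M : Fin n → Fin n → Bool} (hM : M ∈ Mnd n d) {j s : Fin n}
    (hjs : M j s = true) :
    (n - d) * d ≤
      (((univ ×ˢ univ : Finset (Fin n × Fin n)).filter
        fun p => M p.1 s = false ∧ M p.1 p.2 = true ∧ M j p.2 = false).card) + d * d := by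
  obtain ⟨hr, hc⟩ := mem_Mnd.mp hM
  set Z := (univ : Finset (Fin n)).filter (fun i' => M i' s = false) with hZdef
  have hZcard : Z.card = n - d := by
    have h1 := Finset.card_filter_add_card_filter_not
      (s := (univ : Finset (Fin n))) (p := fun i' => M i' s = true)
    have h2 : (univ.filter fun i' => M i' s = true).card = d := hc s
    have h3 : (univ.filter fun i' : Fin n => ¬ M i' s = true) = Z := by
      apply Finset.filter_congr; intro a _; simp
    rw [h2, h3] at h1
    simp only [Finset.card_univ, Fintype.card_fin] at h1
    omega
  have hcnt : (((univ ×ˢ univ : Finset (Fin n × Fin n)).filter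
        fun p => M p.1 s = false ∧ M p.1 p.2 = true ∧ M j p.2 = false).card)
      = ∑ i' ∈ Z, ((rowS M i') \ (rowS M j)).card := by
    rw [Finset.card_filter, Finset.sum_product]
    have hin : ∀ i' : Fin n,
        (∑ k' : Fin n, if M i' s = false ∧ M i' k' = true ∧ M j k' = false then 1 else 0)
        = if M i' s = false then ((rowS M i') \ (rowS M j)).card else 0 := by
      intro i'
      by_cases h : M i' s = false
      · simp only [h, true_and, if_true]
        have : (rowS M i') \ (rowS M j)
            = univ.filter (fun k' => M i' k' = true ∧ M j k' = false) := by
          ext k'; simp [rowS]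
        rw [this, Finset.card_filter]
      · simp [h]
    rw [Finset.sum_congr rfl (fun i' _ => hin i')]
    exact (Finset.sum_filter _ _).symm
  rw [hcnt]
  have hsplit : ∀ i' : Fin n,
      ((rowS M i') \ (rowS M j)).card + ((rowS M i') ∩ (rowS M j)).card = d := by
    intro i'
    rw [Finset.card_sdiff_add_card_inter, hr]
  have hinter : (∑ i' ∈ Z, ((rowS M i') ∩ (rowS M j)).card) ≤ d * d := by
    have hle : (∑ i' ∈ Z, ((rowS M i') ∩ (rowS M j)).card)
        ≤ ∑ i' : Fin n, ((rowS M i') ∩ (rowS M j)).card :=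
      Finset.sum_le_sum_of_subset (Finset.filter_subset _ _)
    have htot : (∑ i' : Fin n, ((rowS M i') ∩ (rowS M j)).card) = d * d := by
      have h1 : ∀ i' : Fin n, ((rowS M i') ∩ (rowS M j)).card
          = ∑ k' : Fin n, if M i' k' = true ∧ M j k' = true then 1 else 0 := by
        intro i'
        have : (rowS M i') ∩ (rowS M j)
            = univ.filter (fun k' => M i' k' = true ∧ M j k' = true) := by
          ext k'; simp [rowS]
        rw [this, Finset.card_filter]
      rw [Finset.sum_congr rfl (fun i' _ => h1 i'), Finset.sum_comm]
      have h2 : ∀ k' : Fin n,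
          (∑ i' : Fin n, if M i' k' = true ∧ M j k' = true then 1 else 0)
          = if M j k' = true then d else 0 := by
        intro k'
        by_cases h : M j k' = true
        · simp only [h, and_true, if_true]
          rw [← Finset.card_filter]
          exact hc k'
        · simp [h]
      rw [Finset.sum_congr rfl (fun k' _ => h2 k'), ← Finset.sum_filter,
        Finset.sum_const, smul_eq_mul]
      have h3 : (univ.filter fun k' => M j k' = true).card = d := hr j
      rw [h3]
    exact hle.trans htot.le
  calc (n - d) * d = ∑ i' ∈ Z, d := by rw [Finset.sum_const, hZcard, smul_eq_mul]
    _ = (∑ i' ∈ Z, ((rowS M i') \ (rowS M j)).card)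
        + ∑ i' ∈ Z, ((rowS M i') ∩ (rowS M j)).card := by
        rw [← Finset.sum_add_distrib]
        exact Finset.sum_congr rfl (fun i' _ => (hsplit i').symm)
    _ ≤ (∑ i' ∈ Z, ((rowS M i') \ (rowS M j)).card) + d * d :=
        Nat.add_le_add_left hinter _

lemma switch_step (hd : 0 < d) (i j : Fin n) (hij : i ≠ j)
    (S T : Finset (Fin n)) (s : Fin n) (hsS : s ∈ S) (hsT : s ∉ T) :
    (CC n d i j S (insert s T)).card * (n - d) ≤ 2 * ((CC n d i j S T).card * d) := by
  set C₁ := CC n d i j S (insert s T) with hC1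
  set C₂ := CC n d i j S T with hC2
  have hC1sub : C₁ ⊆ C₂ := by
    intro M hM
    simp only [hC1, hC2, CC, Finset.mem_filter] at hM ⊢
    exact ⟨hM.1, hM.2.1, fun k hk => hM.2.2 k (Finset.mem_insert_of_mem hk)⟩
  have hmemC1 : ∀ M ∈ C₁, M ∈ Mnd n d ∧ (∀ k ∈ S, M i k = true)
      ∧ (∀ k ∈ insert s T, M j k = true) := by
    intro M hM
    simpa only [hC1, CC, Finset.mem_filter, and_assoc] using hM
  set E := ((C₁ ×ˢ ((univ : Finset (Fin n)) ×ˢ univ)).filter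
    fun x => x.1 x.2.1 s = false ∧ x.1 x.2.1 x.2.2 = true ∧ x.1 j x.2.2 = false) with hE
  set F := ((C₂ ×ˢ ((univ : Finset (Fin n)) ×ˢ univ)).filter
    fun y => y.1 y.2.1 s = true ∧ y.1 j y.2.2 = true) with hF
  -- lower bound on E
  have hlow : C₁.card * ((n - d) * d) ≤ E.card + C₁.card * (d * d) := by
    have hEcard : E.card = ∑ M ∈ C₁,
        (((univ ×ˢ univ : Finset (Fin n × Fin n)).filter
          fun p => M p.1 s = false ∧ M p.1 p.2 = true ∧ M j p.2 = false).card) := by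
      rw [hE, Finset.card_filter, Finset.sum_product]
      exact Finset.sum_congr rfl (fun M _ => (Finset.card_filter _ _).symm)
    rw [hEcard]
    calc C₁.card * ((n - d) * d) = ∑ _M ∈ C₁, (n - d) * d := by
          rw [Finset.sum_const, smul_eq_mul]
      _ ≤ ∑ M ∈ C₁, ((((univ ×ˢ univ : Finset (Fin n × Fin n)).filter
            fun p => M p.1 s = false ∧ M p.1 p.2 = true ∧ M j p.2 = false).card) + d * d) := by
          apply Finset.sum_le_sum
          intro M hM
          obtain ⟨hMnd, _, hTj⟩ := hmemC1 M hM
          exact forward_count hMnd (hTj s (Finset.mem_insert_self s T))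
      _ = _ := by rw [Finset.sum_add_distrib, Finset.sum_const, smul_eq_mul]
  -- upper bound on F
  have hFcard : F.card = C₂.card * (d * d) := by
    rw [hF, Finset.card_filter, Finset.sum_product]
    have hper : ∀ M ∈ C₂, (∑ p ∈ (univ : Finset (Fin n)) ×ˢ univ,
        if M p.1 s = true ∧ M j p.2 = true then 1 else 0) = d * d := by
      intro M hM
      obtain ⟨hr, hc⟩ := mem_Mnd.mp (Finset.mem_filter.mp hM).1
      rw [Finset.sum_product]
      have : ∀ i' : Fin n, (∑ k' : Fin n, if M i' s = true ∧ M j k' = true then 1 else 0)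
          = if M i' s = true then d else 0 := by
        intro i'
        by_cases h : M i' s = true
        · simp only [h, true_and, if_true]
          rw [← Finset.card_filter]; exact hr j
        · simp [h]
      rw [Finset.sum_congr rfl (fun i' _ => this i'), ← Finset.sum_filter,
        Finset.sum_const, smul_eq_mul]
      have h4 : (univ.filter fun i' => M i' s = true).card = d := hc s
      rw [h4]
    calc (∑ M ∈ C₂, ∑ p ∈ (univ : Finset (Fin n)) ×ˢ univ,
          if M p.1 s = true ∧ M j p.2 = true then 1 else 0)
        = ∑ _M ∈ C₂, d * d := Finset.sum_congr rfl hper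
      _ = C₂.card * (d * d) := by rw [Finset.sum_const, smul_eq_mul]
  -- injection from E to F
  have hEF : E.card ≤ F.card := by
    apply Finset.card_le_card_of_injOn
      (fun x => (swM x.1 j x.2.1 s x.2.2, x.2))
    · intro x hx
      obtain ⟨hxmem, hP1, hP2, hP3⟩ := Finset.mem_filter.mp hx
      obtain ⟨hxC1, -⟩ := Finset.mem_product.mp hxmem
      obtain ⟨hMnd, hSi, hTj⟩ := hmemC1 x.1 hxC1
      have hjs : x.1 j s = true := hTj s (Finset.mem_insert_self s T)
      have hji' : j ≠ x.2.1 := fun h => by rw [← h] at hP1; rw [hjs] at hP1; exact Bool.noConfusion hP1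
      have hsk' : s ≠ x.2.2 := fun h => by rw [← h] at hP2; rw [hP1] at hP2; exact Bool.noConfusion hP2
      have hii' : i ≠ x.2.1 := fun h => by
        have := hSi s hsS; rw [h] at this; rw [this] at hP1; exact Bool.noConfusion hP1
      have hNmem : swM x.1 j x.2.1 s x.2.2 ∈ Mnd n d := swM_mem hMnd hjs hP3 hP1 hP2
      rw [hF, Finset.mem_coe, Finset.mem_filter]
      refine ⟨Finset.mem_product.mpr ⟨?_, by simp⟩, ?_, ?_⟩
      · rw [hC2, CC, Finset.mem_filter]
        refine ⟨hNmem, ?_, ?_⟩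
        · intro k hk
          show swM x.1 j x.2.1 s x.2.2 i k = true
          rw [swM_row_other i hij hii']
          exact hSi k hk
        · intro k hk
          have hks : k ≠ s := fun h => hsT (h ▸ hk)
          have hjk : x.1 j k = true := hTj k (Finset.mem_insert_of_mem hk)
          have hkk' : k ≠ x.2.2 := fun h => by rw [h] at hjk; rw [hjk] at hP3; exact Bool.noConfusion hP3
          simp [swM, hks, hkk', hjk]
      · simp [swM, hji'.symm]
      · simp [swM, hsk'.symm]
    · intro x hx y hy hxy
      obtain ⟨hxmem, hxP1, hxP2, hxP3⟩ := Finset.mem_filter.mp hx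
      obtain ⟨hymem, hyP1, hyP2, hyP3⟩ := Finset.mem_filter.mp hy
      obtain ⟨hxC1, -⟩ := Finset.mem_product.mp hxmem
      obtain ⟨hyC1, -⟩ := Finset.mem_product.mp hymem
      obtain ⟨hxMnd, hxSi, hxTj⟩ := hmemC1 x.1 hxC1
      obtain ⟨hyMnd, hySi, hyTj⟩ := hmemC1 y.1 hyC1
      have hxjs : x.1 j s = true := hxTj s (Finset.mem_insert_self s T)
      have hyjs : y.1 j s = true := hyTj s (Finset.mem_insert_self s T)
      have hxy' : (swM x.1 j x.2.1 s x.2.2, x.2) = (swM y.1 j y.2.1 s y.2.2, y.2) := hxy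
      obtain ⟨h1, h2⟩ := Prod.mk.inj hxy'
      rw [← h2] at h1
      have hx1 : x.1 = y.1 := by
        have hxr := swM_swM hxjs hxP3 hxP1 hxP2
        have hyr := swM_swM hyjs (h2 ▸ hyP3) (h2 ▸ hyP1) (h2 ▸ hyP2)
        rw [← hxr, ← hyr, h1]
      exact Prod.ext hx1 h2
  -- combine
  have hfin : C₁.card * ((n - d) * d) ≤ (2 * (C₂.card * d)) * d := by
    calc C₁.card * ((n - d) * d) ≤ E.card + C₁.card * (d * d) := hlow
      _ ≤ C₂.card * (d * d) + C₂.card * (d * d) :=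
          Nat.add_le_add (hEF.trans_eq hFcard)
            (Nat.mul_le_mul_right _ (Finset.card_le_card hC1sub))
      _ = (2 * (C₂.card * d)) * d := by ring
  refine Nat.le_of_mul_le_mul_right ?_ hd
  calc C₁.card * (n - d) * d = C₁.card * ((n - d) * d) := by ring
    _ ≤ (2 * (C₂.card * d)) * d := hfin

lemma switch_iter (hd : 0 < d) (i j : Fin n) (hij : i ≠ j) (S : Finset (Fin n)) :
    ∀ T ⊆ S, (CC n d i j S T).card * (n - d) ^ T.card
      ≤ (CC n d i j S ∅).card * (2 * d) ^ T.card := by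
  intro T
  induction T using Finset.induction_on with
  | empty => simp
  | @insert a T' ha ih =>
    intro hsub
    have hT' : T' ⊆ S := (Finset.subset_insert a T').trans hsub
    have haS : a ∈ S := hsub (Finset.mem_insert_self a T')
    rw [Finset.card_insert_of_notMem ha]
    calc (CC n d i j S (insert a T')).card * (n - d) ^ (T'.card + 1)
        = ((CC n d i j S (insert a T')).card * (n - d)) * (n - d) ^ T'.card := by ring
      _ ≤ (2 * ((CC n d i j S T').card * d)) * (n - d) ^ T'.card :=
          Nat.mul_le_mul_right _ (switch_step hd i j hij S T' a haS ha)
      _ = (2 * d) * ((CC n d i j S T').card * (n - d) ^ T'.card) := by ring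
      _ ≤ (2 * d) * ((CC n d i j S ∅).card * (2 * d) ^ T'.card) :=
          Nat.mul_le_mul_left _ (ih hT')
      _ = (CC n d i j S ∅).card * (2 * d) ^ (T'.card + 1) := by ring

lemma sum_CC_empty (i j : Fin n) (m : ℕ) :
    ∑ S ∈ Finset.powersetCard m (Finset.univ : Finset (Fin n)),
      (CC n d i j S ∅).card = d.choose m * (Mnd n d).card := by
  have h1 : ∀ S : Finset (Fin n), (CC n d i j S ∅).card
      = ∑ M ∈ Mnd n d, if (∀ k ∈ S, M i k = true) then 1 else 0 := by
    intro S
    rw [CC, Finset.card_filter]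
    exact Finset.sum_congr rfl (fun M _ => by simp)
  rw [Finset.sum_congr rfl (fun S _ => h1 S), Finset.sum_comm]
  have h2 : ∀ M ∈ Mnd n d,
      (∑ S ∈ Finset.powersetCard m (univ : Finset (Fin n)),
        if (∀ k ∈ S, M i k = true) then 1 else 0) = d.choose m := by
    intro M hM
    rw [← Finset.card_filter]
    have he : (Finset.powersetCard m (univ : Finset (Fin n))).filter
        (fun S => ∀ k ∈ S, M i k = true) = Finset.powersetCard m (rowS M i) := by
      ext S
      simp only [Finset.mem_filter, Finset.mem_powersetCard, Finset.subset_univ, true_and]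
      constructor
      · rintro ⟨hc, hs⟩; exact ⟨fun k hk => by simp [rowS, hs k hk], hc⟩
      · rintro ⟨hs, hc⟩; exact ⟨hc, fun k hk => by simpa [rowS] using hs hk⟩
    rw [he, Finset.card_powersetCard, (mem_Mnd.mp hM).1 i]
  rw [Finset.sum_congr rfl h2, Finset.sum_const, smul_eq_mul, mul_comm]

lemma card_valfilter (hdn : d ≤ n) :
    ((univ : Finset (Fin n)).filter fun x => x.val < d).card = d := by
  rw [← Finset.card_range d]
  apply Finset.card_bij (fun (x : Fin n) _ => x.val)
  · intro a ha; simp only [Finset.mem_filter] at ha; simpa using ha.2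
  · intro a _ b _ h; exact Fin.val_injective h
  · intro b hb
    simp only [Finset.mem_range] at hb
    exact ⟨⟨b, lt_of_lt_of_le hb hdn⟩, by simp [hb], rfl⟩

lemma Mnd_nonempty (hn : 0 < n) (hdn : d ≤ n) : (Mnd n d).Nonempty := by
  haveI : NeZero n := ⟨hn.ne'⟩
  refine ⟨fun i j => decide (((j - i : Fin n)).val < d), ?_⟩
  rw [mem_Mnd]
  constructor
  · intro i
    have he : rowS (fun i j => decide (((j - i : Fin n)).val < d)) i
        = univ.filter (fun j : Fin n => ((j - i : Fin n)).val < d) := by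
      ext b; simp [rowS]
    rw [he]
    refine Eq.trans ?_ (card_valfilter (n := n) hdn)
    apply Finset.card_bij (fun (a : Fin n) _ => a - i)
    · intro a ha; simp only [Finset.mem_filter] at ha ⊢; exact ⟨Finset.mem_univ _, ha.2⟩
    · intro a _ b _ h; exact sub_left_inj.mp h
    · intro b hb
      simp only [Finset.mem_filter] at hb
      exact ⟨b + i, by simp [hb.2], by simp⟩
  · intro j
    have he : colS (fun i j => decide (((j - i : Fin n)).val < d)) j
        = univ.filter (fun a : Fin n => ((j - a : Fin n)).val < d) := by
      ext b; simp [colS]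
    rw [he]
    refine Eq.trans ?_ (card_valfilter (n := n) hdn)
    apply Finset.card_bij (fun (a : Fin n) _ => j - a)
    · intro a ha; simp only [Finset.mem_filter] at ha ⊢; exact ⟨Finset.mem_univ _, ha.2⟩
    · intro a _ b _ h; exact sub_right_inj.mp h
    · intro b hb
      simp only [Finset.mem_filter] at hb
      exact ⟨j - b, by simp [hb.2], by simp⟩

lemma pow_self_le_exp_mul_factorial : ∀ m : ℕ, (m : ℝ) ^ m ≤ Real.exp m * m.factorial
  | 0 => by simp
  | (m + 1) => by
    have ih := pow_self_le_exp_mul_factorial m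
    rcases Nat.eq_zero_or_pos m with h0 | hmpos
    · subst h0
      have h1 : (1:ℝ) ≤ Real.exp 1 := Real.one_le_exp (by norm_num)
      simp only [Nat.cast_one, pow_one, Nat.factorial_one, Nat.cast_one, mul_one,
        Nat.cast_ofNat, Nat.zero_add]
      simpa using h1
    · have hmR : (0:ℝ) < m := by exact_mod_cast hmpos
      have hkey : ((m:ℝ) + 1) ≤ Real.exp (1 / m) * m := by
        have h1 : 1 / (m:ℝ) + 1 ≤ Real.exp (1 / m) := Real.add_one_le_exp _
        have h2 : (1 / (m:ℝ) + 1) * m ≤ Real.exp (1 / m) * m :=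
          mul_le_mul_of_nonneg_right h1 hmR.le
        calc ((m:ℝ) + 1) = (1 / (m:ℝ) + 1) * m := by field_simp; ring
          _ ≤ _ := h2
      have hpow : ((m:ℝ) + 1) ^ m ≤ Real.exp 1 * (m:ℝ) ^ m := by
        calc ((m:ℝ) + 1) ^ m ≤ (Real.exp (1 / m) * m) ^ m :=
              pow_le_pow_left₀ (by positivity) hkey m
          _ = Real.exp (1 / m) ^ m * (m:ℝ) ^ m := mul_pow _ _ _
          _ = Real.exp 1 * (m:ℝ) ^ m := by
              rw [← Real.exp_nat_mul]
              congr 2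
              field_simp
      have hexp : Real.exp ((m:ℕ) + 1 : ℕ) = Real.exp m * Real.exp 1 := by
        push_cast; rw [← Real.exp_add]
      calc ((m + 1 : ℕ) : ℝ) ^ (m + 1) = ((m:ℝ) + 1) ^ m * ((m:ℝ) + 1) := by
            push_cast; ring
        _ ≤ (Real.exp 1 * (m:ℝ) ^ m) * ((m:ℝ) + 1) := by
            apply mul_le_mul_of_nonneg_right hpow (by positivity)
        _ ≤ (Real.exp 1 * (Real.exp m * m.factorial)) * ((m:ℝ) + 1) := by
            apply mul_le_mul_of_nonneg_right _ (by positivity)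
            exact mul_le_mul_of_nonneg_left ih (Real.exp_pos 1).le
        _ = Real.exp ((m:ℕ) + 1 : ℕ) * (((m:ℝ) + 1) * m.factorial) := by
            rw [hexp]; ring
        _ = Real.exp ((m:ℕ) + 1 : ℕ) * ((m + 1).factorial) := by
            rw [Nat.factorial_succ]; push_cast; ring

lemma choose_le_exp_pow {d m : ℕ} (hm : 0 < m) :
    (d.choose m : ℝ) ≤ (Real.exp 1 * d / m) ^ m := by
  have hmR : (0:ℝ) < m := by exact_mod_cast hm
  have hfac : (0:ℝ) < (m.factorial : ℝ) := by exact_mod_cast m.factorial_pos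
  have h2 := pow_self_le_exp_mul_factorial m
  have h3 : Real.exp (m : ℕ) = Real.exp 1 ^ m := by
    rw [← Real.exp_nat_mul]; norm_num
  calc (d.choose m : ℝ) ≤ (d:ℝ) ^ m / m.factorial := Nat.choose_le_pow_div m d
    _ ≤ (Real.exp 1 * d / m) ^ m := by
        rw [div_pow, mul_pow, div_le_div_iff₀ hfac (pow_pos hmR m)]
        calc (d:ℝ)^m * (m:ℝ)^m
            ≤ (d:ℝ)^m * (Real.exp 1 ^ m * m.factorial) := by
              apply mul_le_mul_of_nonneg_left _ (pow_nonneg (Nat.cast_nonneg d) m)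
              rw [← h3]; exact h2
          _ = Real.exp 1 ^ m * (d:ℝ)^m * m.factorial := by ring

lemma union_filter_eq {n : ℕ} (M : Fin n → Fin n → Bool) (i j : Fin n) :
    (Finset.univ.filter fun k : Fin n => toRealM M i k + toRealM M j k ≠ 0)
      = rowS M i ∪ rowS M j := by
  ext k
  simp only [Finset.mem_filter, Finset.mem_union, Finset.mem_univ, true_and, rowS]
  cases hik : M i k <;> cases hjk : M j k <;> simp [toRealM, hik, hjk]

end PropDR

set_option maxHeartbeats 2000000 in
/-- Proposition 3.2 of the paper: with high probability every two distinct rows of a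
random matrix from `Mnd n d` have almost disjoint supports, i.e.
`|supp (R_i + R_j)| ≥ 2(1-ε)d`. -/
theorem prop_disjoint_rows (n d : ℕ) (ε : ℝ)
    (hε0 : 0 < ε) (hε1 : ε < 1) (hd8 : 8 ≤ d) (hdn : (d : ℝ) ≤ ε * n / 6) :
    1 - (n ^ 2 / 2) * (Real.exp 1 * d / (ε * n)) ^ (ε * d) ≤
      (((Mnd n d).filter fun M => ∀ i j : Fin n, i ≠ j →
          2 * (1 - ε) * d ≤
            ((Finset.univ.filter fun k : Fin n =>
              toRealM M i k + toRealM M j k ≠ 0).card : ℝ)).card : ℝ) /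
        ((Mnd n d).card : ℝ) := by
  classical
  open PropDR in
  have hd0 : 0 < d := lt_of_lt_of_le (by norm_num) hd8
  have hd0R : (0:ℝ) < d := by exact_mod_cast hd0
  have hd8R : (8:ℝ) ≤ d := by exact_mod_cast hd8
  have hn0 : 0 < n := by
    rcases Nat.eq_zero_or_pos n with h | h
    · subst h; norm_num at hdn; nlinarith
    · exact h
  have hn0R : (0:ℝ) < n := by exact_mod_cast hn0
  have hεn : (0:ℝ) < ε * n := by positivity
  have hdlenR : (d:ℝ) ≤ n := by nlinarith
  have hdlen : d ≤ n := by exact_mod_cast hdlenR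
  have hMne := PropDR.Mnd_nonempty (n := n) (d := d) hn0 hdlen
  have hMpos : (0:ℝ) < ((Mnd n d).card : ℝ) := by
    exact_mod_cast Finset.card_pos.mpr hMne
  set c : ℝ := Real.exp 1 * d / (ε * n) with hc
  have hcpos : 0 < c := by positivity
  have hexp1 : Real.exp 1 < 2.7182818286 := Real.exp_one_lt_d9
  have hexp1' : (0:ℝ) < Real.exp 1 := Real.exp_pos 1
  have hc6 : c ≤ Real.exp 1 / 6 := by
    rw [hc, div_le_div_iff₀ hεn (by norm_num)]
    nlinarith
  have hclt : c < 1/2 := by nlinarith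
  suffices hB : (((Mnd n d).filter fun M => ¬ ∀ i j : Fin n, i ≠ j →
      2 * (1 - ε) * d ≤
        ((Finset.univ.filter fun k : Fin n =>
          toRealM M i k + toRealM M j k ≠ 0).card : ℝ)).card : ℝ)
      ≤ ((n:ℝ) ^ 2 / 2) * c ^ (ε * d) * ((Mnd n d).card : ℝ) by
    have hpart := Finset.card_filter_add_card_filter_not
      (s := Mnd n d) (p := fun M => ∀ i j : Fin n, i ≠ j →
        2 * (1 - ε) * d ≤
          ((Finset.univ.filter fun k : Fin n =>
            toRealM M i k + toRealM M j k ≠ 0).card : ℝ))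
    have hpartR : (((Mnd n d).filter fun M => ∀ i j : Fin n, i ≠ j →
        2 * (1 - ε) * d ≤
          ((Finset.univ.filter fun k : Fin n =>
            toRealM M i k + toRealM M j k ≠ 0).card : ℝ)).card : ℝ)
        + (((Mnd n d).filter fun M => ¬ ∀ i j : Fin n, i ≠ j →
        2 * (1 - ε) * d ≤
          ((Finset.univ.filter fun k : Fin n =>
            toRealM M i k + toRealM M j k ≠ 0).card : ℝ)).card : ℝ)
        = ((Mnd n d).card : ℝ) := by exact_mod_cast hpart
    rw [le_div_iff₀ hMpos]
    nlinarith [hB, hpartR]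
  by_cases hεhalf : (1:ℝ)/2 ≤ ε
  · -- every matrix is good
    have hempty : ((Mnd n d).filter fun M => ¬ ∀ i j : Fin n, i ≠ j →
        2 * (1 - ε) * d ≤
          ((Finset.univ.filter fun k : Fin n =>
            toRealM M i k + toRealM M j k ≠ 0).card : ℝ)) = ∅ := by
      rw [Finset.filter_eq_empty_iff]
      intro M hM
      rw [not_not]
      intro i j hij
      rw [PropDR.union_filter_eq M i j]
      have hsub : (d:ℝ) ≤ ((rowS M i ∪ rowS M j).card : ℝ) := by
        have h1 : (rowS M i).card ≤ (rowS M i ∪ rowS M j).card :=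
          Finset.card_le_card Finset.subset_union_left
        rw [(PropDR.mem_Mnd.mp hM).1 i] at h1
        exact_mod_cast h1
      nlinarith
    rw [hempty]
    simp only [Finset.card_empty, Nat.cast_zero]
    positivity
  · push_neg at hεhalf
    have hd12 : (d:ℝ) ≤ n/12 := by nlinarith
    have hdltn : (d:ℝ) < n := by nlinarith
    have hndpos : (0:ℝ) < (n:ℝ) - d := by linarith
    set m := ⌈2*ε*(d:ℝ)⌉₊ with hm
    have hm0 : 0 < m := Nat.ceil_pos.mpr (by positivity)
    have hmR : (0:ℝ) < m := by exact_mod_cast hm0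
    have hm2 : 2*ε*(d:ℝ) ≤ m := Nat.le_ceil _
    -- key numeric estimate
    have hu1 : Real.exp 1 * d / m ≤ Real.exp 1 / (2*ε) := by
      rw [div_le_div_iff₀ hmR (by positivity)]
      have hx := mul_le_mul_of_nonneg_left hm2 hexp1'.le
      linarith [hx]
    have hu2 : 2*(d:ℝ)/((n:ℝ)-d) ≤ 24*(d:ℝ)/(11*(n:ℝ)) := by
      rw [div_le_div_iff₀ hndpos (by positivity)]
      nlinarith [mul_le_mul_of_nonneg_left hd12 (by positivity : (0:ℝ) ≤ 24*(d:ℝ))]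
    have huc : Real.exp 1 * d / m * (2*(d:ℝ)/((n:ℝ)-d)) ≤ 12/11 * c := by
      have h := mul_le_mul hu1 hu2 (by positivity) (by positivity)
      calc Real.exp 1 * d / m * (2*(d:ℝ)/((n:ℝ)-d))
          ≤ Real.exp 1 / (2*ε) * (24*(d:ℝ)/(11*(n:ℝ))) := h
        _ = 12/11 * c := by rw [hc]; field_simp; ring
    have h12c0 : (0:ℝ) < 12/11 * c := by positivity
    have h12c1 : 12/11 * c ≤ 1 := by nlinarith
    have hkey : (d.choose m : ℝ) * (2*(d:ℝ)/((n:ℝ)-d))^m ≤ c ^ (ε * (d:ℝ)) := by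
      calc (d.choose m : ℝ) * (2*(d:ℝ)/((n:ℝ)-d))^m
          ≤ (Real.exp 1 * d / m)^m * (2*(d:ℝ)/((n:ℝ)-d))^m :=
            mul_le_mul_of_nonneg_right (PropDR.choose_le_exp_pow hm0) (by positivity)
        _ = (Real.exp 1 * d / m * (2*(d:ℝ)/((n:ℝ)-d)))^m := (mul_pow _ _ _).symm
        _ ≤ (12/11 * c)^m := pow_le_pow_left₀ (by positivity) huc m
        _ = (12/11 * c) ^ (m:ℝ) := (Real.rpow_natCast _ m).symm
        _ ≤ (12/11 * c) ^ (2*(ε*(d:ℝ))) := by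
            apply Real.rpow_le_rpow_of_exponent_ge h12c0 h12c1
            calc 2*(ε*(d:ℝ)) = 2*ε*d := by ring
              _ ≤ m := hm2
        _ = ((12/11 * c) ^ (2:ℝ)) ^ (ε*(d:ℝ)) := Real.rpow_mul h12c0.le 2 (ε*d)
        _ ≤ c ^ (ε*(d:ℝ)) := by
            apply Real.rpow_le_rpow (Real.rpow_nonneg h12c0.le _) ?_ (by positivity)
            rw [show ((2:ℝ)) = ((2:ℕ):ℝ) by norm_num, Real.rpow_natCast]
            nlinarith
    -- per-pair bound
    have hperpair : ∀ p : Fin n × Fin n, p.1 ≠ p.2 →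
        (((Mnd n d).filter fun M => m ≤ (rowS M p.1 ∩ rowS M p.2).card).card : ℝ)
          ≤ c ^ (ε * (d:ℝ)) * ((Mnd n d).card : ℝ) := by
      intro p hp
      have hsubBad : ((Mnd n d).filter fun M => m ≤ (rowS M p.1 ∩ rowS M p.2).card)
          ⊆ (Finset.powersetCard m (univ : Finset (Fin n))).biUnion
            (fun S => PropDR.CC n d p.1 p.2 S S) := by
        intro M hM
        obtain ⟨hMnd, hmle⟩ := Finset.mem_filter.mp hM
        obtain ⟨S, hSsub, hScard⟩ := Finset.exists_subset_card_eq hmle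
        refine Finset.mem_biUnion.mpr ⟨S,
          Finset.mem_powersetCard.mpr ⟨Finset.subset_univ S, hScard⟩, ?_⟩
        rw [PropDR.CC, Finset.mem_filter]
        refine ⟨hMnd, fun k hk => ?_, fun k hk => ?_⟩
        · have h := hSsub hk; rw [Finset.mem_inter] at h
          simpa [rowS] using h.1
        · have h := hSsub hk; rw [Finset.mem_inter] at h
          simpa [rowS] using h.2
      have h2 : ∀ S ∈ Finset.powersetCard m (univ : Finset (Fin n)),
          ((PropDR.CC n d p.1 p.2 S S).card : ℝ)
            ≤ ((PropDR.CC n d p.1 p.2 S ∅).card : ℝ) * (2*(d:ℝ)/((n:ℝ)-d))^m := by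
        intro S hS
        have hScard := (Finset.mem_powersetCard.mp hS).2
        have hnat := PropDR.switch_iter hd0 p.1 p.2 hp S S (subset_refl S)
        rw [hScard] at hnat
        have hcast : ((PropDR.CC n d p.1 p.2 S S).card : ℝ) * ((n:ℝ)-d)^m
            ≤ ((PropDR.CC n d p.1 p.2 S ∅).card : ℝ) * (2*(d:ℝ))^m := by
          have h := (Nat.cast_le (α := ℝ)).mpr hnat
          push_cast [Nat.cast_sub hdlen] at h
          exact h
        rw [div_pow, ← mul_div_assoc, le_div_iff₀ (pow_pos hndpos m)]
        exact hcast
      calc (((Mnd n d).filter fun M => m ≤ (rowS M p.1 ∩ rowS M p.2).card).card : ℝ)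
          ≤ (((Finset.powersetCard m (univ : Finset (Fin n))).biUnion
              (fun S => PropDR.CC n d p.1 p.2 S S)).card : ℝ) := by
            exact_mod_cast Finset.card_le_card hsubBad
        _ ≤ ∑ S ∈ Finset.powersetCard m (univ : Finset (Fin n)),
              ((PropDR.CC n d p.1 p.2 S S).card : ℝ) := by
            exact_mod_cast Finset.card_biUnion_le
        _ ≤ ∑ S ∈ Finset.powersetCard m (univ : Finset (Fin n)),
              ((PropDR.CC n d p.1 p.2 S ∅).card : ℝ) * (2*(d:ℝ)/((n:ℝ)-d))^m :=
            Finset.sum_le_sum h2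
        _ = (∑ S ∈ Finset.powersetCard m (univ : Finset (Fin n)),
              ((PropDR.CC n d p.1 p.2 S ∅).card : ℝ)) * (2*(d:ℝ)/((n:ℝ)-d))^m := by
            rw [← Finset.sum_mul]
        _ = ((d.choose m : ℝ) * ((Mnd n d).card : ℝ)) * (2*(d:ℝ)/((n:ℝ)-d))^m := by
            have := PropDR.sum_CC_empty (n := n) (d := d) p.1 p.2 m
            have hcast : (∑ S ∈ Finset.powersetCard m (univ : Finset (Fin n)),
                ((PropDR.CC n d p.1 p.2 S ∅).card : ℝ))
                = (d.choose m : ℝ) * ((Mnd n d).card : ℝ) := by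
              exact_mod_cast congrArg (Nat.cast (R := ℝ)) this
            rw [hcast]
        _ = ((d.choose m : ℝ) * (2*(d:ℝ)/((n:ℝ)-d))^m) * ((Mnd n d).card : ℝ) := by ring
        _ ≤ c ^ (ε * (d:ℝ)) * ((Mnd n d).card : ℝ) :=
            mul_le_mul_of_nonneg_right hkey hMpos.le
    -- the set of ordered pairs
    set PS := (univ : Finset (Fin n × Fin n)).filter (fun p => p.1 < p.2) with hPS
    have hPScard : (PS.card : ℝ) ≤ (n:ℝ)^2/2 := by
      have himg : PS.card = (PS.image Prod.swap).card :=
        (Finset.card_image_of_injective _ Prod.swap_injective).symm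
      have hdisj : Disjoint PS (PS.image Prod.swap) := by
        rw [Finset.disjoint_left]
        intro p hp hp'
        rw [hPS, Finset.mem_filter] at hp
        obtain ⟨q, hq, hqe⟩ := Finset.mem_image.mp hp'
        rw [hPS, Finset.mem_filter] at hq
        rw [← hqe] at hp
        exact absurd hq.2 (lt_asymm hp.2)
      have hun : PS.card + (PS.image Prod.swap).card ≤ n * n := by
        rw [← Finset.card_union_of_disjoint hdisj]
        calc (PS ∪ PS.image Prod.swap).card
            ≤ (univ : Finset (Fin n × Fin n)).card :=
              Finset.card_le_card (Finset.subset_univ _)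
          _ = n * n := by simp [Finset.card_univ]
      have h2 : 2 * PS.card ≤ n * n := by omega
      have h2R : 2 * (PS.card : ℝ) ≤ (n:ℝ) * n := by exact_mod_cast h2
      nlinarith
    -- bad set inclusion
    have hBsub : ((Mnd n d).filter fun M => ¬ ∀ i j : Fin n, i ≠ j →
        2 * (1 - ε) * d ≤
          ((Finset.univ.filter fun k : Fin n =>
            toRealM M i k + toRealM M j k ≠ 0).card : ℝ))
        ⊆ PS.biUnion (fun p =>
            (Mnd n d).filter fun M => m ≤ (rowS M p.1 ∩ rowS M p.2).card) := by
      intro M hM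
      obtain ⟨hMnd, hnP⟩ := Finset.mem_filter.mp hM
      push_neg at hnP
      obtain ⟨i, j, hij, hlt⟩ := hnP
      have hr := (PropDR.mem_Mnd.mp hMnd).1
      have hcards : ((rowS M i ∪ rowS M j).card : ℝ)
          + ((rowS M i ∩ rowS M j).card : ℝ) = 2*d := by
        have h := Finset.card_union_add_card_inter (rowS M i) (rowS M j)
        rw [hr i, hr j] at h
        have : (((rowS M i ∪ rowS M j).card + (rowS M i ∩ rowS M j).card : ℕ) : ℝ)
            = ((d + d : ℕ) : ℝ) := by exact_mod_cast congrArg (Nat.cast (R := ℝ)) h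
        push_cast at this
        linarith
      rw [PropDR.union_filter_eq M i j] at hlt
      have hint : m ≤ (rowS M i ∩ rowS M j).card := by
        apply Nat.ceil_le.mpr
        nlinarith
      rcases lt_or_gt_of_ne hij with hlt' | hgt'
      · refine Finset.mem_biUnion.mpr ⟨(i, j), ?_, ?_⟩
        · rw [hPS, Finset.mem_filter]; exact ⟨Finset.mem_univ _, hlt'⟩
        · rw [Finset.mem_filter]; exact ⟨hMnd, hint⟩
      · refine Finset.mem_biUnion.mpr ⟨(j, i), ?_, ?_⟩
        · rw [hPS, Finset.mem_filter]; exact ⟨Finset.mem_univ _, hgt'⟩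
        · rw [Finset.mem_filter]
          refine ⟨hMnd, ?_⟩
          rw [Finset.inter_comm]
          exact hint
    -- final chain
    calc (((Mnd n d).filter fun M => ¬ ∀ i j : Fin n, i ≠ j →
          2 * (1 - ε) * d ≤
            ((Finset.univ.filter fun k : Fin n =>
              toRealM M i k + toRealM M j k ≠ 0).card : ℝ)).card : ℝ)
        ≤ ((PS.biUnion (fun p =>
            (Mnd n d).filter fun M => m ≤ (rowS M p.1 ∩ rowS M p.2).card)).card : ℝ) := by
          exact_mod_cast Finset.card_le_card hBsub
      _ ≤ ∑ p ∈ PS, (((Mnd n d).filter fun M =>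
            m ≤ (rowS M p.1 ∩ rowS M p.2).card).card : ℝ) := by
          exact_mod_cast Finset.card_biUnion_le
      _ ≤ ∑ p ∈ PS, c ^ (ε * (d:ℝ)) * ((Mnd n d).card : ℝ) := by
          apply Finset.sum_le_sum
          intro p hp
          rw [hPS, Finset.mem_filter] at hp
          exact hperpair p (ne_of_lt hp.2)
      _ = (PS.card : ℝ) * (c ^ (ε * (d:ℝ)) * ((Mnd n d).card : ℝ)) := by
          rw [Finset.sum_const, nsmul_eq_mul]
      _ ≤ ((n:ℝ)^2/2) * (c ^ (ε * (d:ℝ)) * ((Mnd n d).card : ℝ)) :=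
          mul_le_mul_of_nonneg_right hPScard (by positivity)
      _ = ((n:ℝ)^2/2) * c ^ (ε * d) * ((Mnd n d).card : ℝ) := by ring
end

section
/- Let 1 ≤ d ≤ n and 0 < α, β < 1 with αn an integer. If a matrix M ∈ M_{n,d} does not belong to Ω⁰(α, β/2) (i.e., M has no zero submatrix on a set of at least αn rows and at least βn/2 columns), then for every J ⊆ [n] with |J| ≥ βn one has |{i ∈ [n] : |supp R_i ∩ J| ≥ β/(2α)}| ≥ (1−α)n. -/
open Finset
open scoped Classical

/-- Lemma 3.5 of the paper: if `M` has no zero submatrix with at least `αn` rows and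
at least `βn/2` columns, then for any set `J` of at least `βn` columns, at least
`(1-α)n` rows have at least `β/(2α)` ones inside `J`. -/
theorem lem_graph3 (n d : ℕ) (α β : ℝ) (M : Fin n → Fin n → Bool)
    (hd1 : 1 ≤ d) (hdn : d ≤ n)
    (hα0 : 0 < α) (hα1 : α < 1) (hβ0 : 0 < β) (hβ1 : β < 1)
    (hint : ∃ m : ℕ, (m : ℝ) = α * n)
    (hM : M ∈ Mnd n d)
    (hno : ¬ ∃ I J : Finset (Fin n),
        α * n ≤ (I.card : ℝ) ∧ β * n / 2 ≤ (J.card : ℝ) ∧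
        ∀ i ∈ I, ∀ j ∈ J, M i j = false) :
    ∀ J : Finset (Fin n), β * n ≤ (J.card : ℝ) →
      (1 - α) * n ≤
        ((Finset.univ.filter fun i : Fin n =>
          β / (2 * α) ≤ ((J.filter fun j => M i j = true).card : ℝ)).card : ℝ) := by
  intro J hJ
  by_contra hcon
  push_neg at hcon
  obtain ⟨m, hm⟩ := hint
  have hn1 : (1 : ℕ) ≤ n := le_trans hd1 hdn
  have hnpos : (0 : ℝ) < n := by exact_mod_cast hn1
  have hm1 : 1 ≤ m := by
    have : (0 : ℝ) < m := by rw [hm]; positivity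
    exact_mod_cast this
  set p : Fin n → Prop := fun i =>
    β / (2 * α) ≤ ((J.filter fun j => M i j = true).card : ℝ) with hp
  set G : Finset (Fin n) := Finset.univ.filter p with hG
  set B : Finset (Fin n) := Finset.univ.filter (fun i => ¬ p i) with hB
  have hGB : G.card + B.card = n := by
    rw [hG, hB, Finset.card_filter_add_card_filter_not]
    simp
  have hBcard : (m : ℝ) < B.card := by
    have : (B.card : ℝ) = n - G.card := by
      have := hGB
      have : (G.card : ℝ) + B.card = n := by exact_mod_cast this
      linarith
    rw [hm, this]
    have : (G.card : ℝ) < (1 - α) * n := hcon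
    nlinarith
  have hmB : m ≤ B.card := by exact_mod_cast hBcard.le
  obtain ⟨I, hIB, hIcard⟩ := Finset.exists_subset_card_eq hmB
  have hIne : I.Nonempty := Finset.card_pos.mp (hIcard ▸ hm1)
  -- each row of I has few ones in J
  have hsum : (∑ i ∈ I, ((J.filter fun j => M i j = true).card : ℝ)) < β * n / 2 := by
    have h1 : (∑ i ∈ I, ((J.filter fun j => M i j = true).card : ℝ)) <
        ∑ _i ∈ I, β / (2 * α) := by
      apply Finset.sum_lt_sum_of_nonempty hIne
      intro i hi
      have := hIB hi
      rw [hB, Finset.mem_filter] at this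
      exact lt_of_not_ge this.2
    have h2 : (∑ _i ∈ I, β / (2 * α)) = β * n / 2 := by
      rw [Finset.sum_const, hIcard, nsmul_eq_mul, hm]
      field_simp
    linarith
  set J' : Finset (Fin n) := J.filter (fun j => ∀ i ∈ I, M i j = false) with hJ'
  set Jbad : Finset (Fin n) := J \ J' with hJbad
  have hswap : (∑ i ∈ I, (J.filter fun j => M i j = true).card) =
      ∑ j ∈ J, (I.filter fun i => M i j = true).card := by
    simp only [Finset.card_filter]
    rw [Finset.sum_comm]
  have hbadle : Jbad.card ≤ ∑ i ∈ I, (J.filter fun j => M i j = true).card := by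
    rw [hswap]
    calc Jbad.card = ∑ _j ∈ Jbad, 1 := by simp
      _ ≤ ∑ j ∈ Jbad, (I.filter fun i => M i j = true).card := by
          apply Finset.sum_le_sum
          intro j hj
          rw [hJbad, Finset.mem_sdiff, hJ'] at hj
          obtain ⟨hjJ, hjn⟩ := hj
          rw [Finset.mem_filter] at hjn
          push_neg at hjn
          obtain ⟨i, hi, hMij⟩ := hjn hjJ
          have : i ∈ I.filter fun i => M i j = true := by
            rw [Finset.mem_filter]
            exact ⟨hi, by simpa using hMij⟩
          exact Finset.card_pos.mpr ⟨i, this⟩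
      _ ≤ ∑ j ∈ J, (I.filter fun i => M i j = true).card :=
          Finset.sum_le_sum_of_subset Finset.sdiff_subset
  have hsubJ : J' ⊆ J := Finset.filter_subset _ _
  have hcards : Jbad.card = J.card - J'.card := Finset.card_sdiff_of_subset hsubJ
  have hJ'le : J'.card ≤ J.card := Finset.card_le_card hsubJ
  have hJ'card : β * n / 2 ≤ (J'.card : ℝ) := by
    have h1 : (Jbad.card : ℝ) = (J.card : ℝ) - J'.card := by
      rw [hcards]
      exact Nat.cast_sub hJ'le
    have h2 : (Jbad.card : ℝ) ≤ ∑ i ∈ I, ((J.filter fun j => M i j = true).card : ℝ) := by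
      push_cast
      exact_mod_cast hbadle
    linarith
  apply hno
  refine ⟨I, J', ?_, hJ'card, ?_⟩
  · rw [← hm, hIcard]
  · intro i hi j hj
    rw [hJ', Finset.mem_filter] at hj
    exact hj.2 i hi
end

section
/- Let ε ∈ (0,1/4), 0 < p < 1/2, 1 ≤ d ≤ n, let m₀ and r be positive integers, set m₁ = m₀ + 2r, and let κ be a real number with m₁ < min{m₀/(2ε), κ} and κ·d ≤ n. Suppose M ∈ M_{n,d} satisfies |S_J| ≥ (1−ε)·d·|J| for every J ⊆ [n] with |J| ≤ κ. Then Mx ≠ 0 for every x ∈ T₂, where T₂ = {x ∈ AC⁺(p) : for some permutation π of [n] with |x_{π(1)}| ≥ … ≥ |x_{π(n)}|, either |x_{π(m₀)}| = 0, or both |x_{π(m₀)}| = 1 and |{i > m₀ : |x_{π(i)} − λ_x| ≥ 1/(2d)}| < 2r}. -/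
open Finset
open scoped Classical

/-- `SJ M J = ⋃_{j ∈ J} supp X_j`: the set of row indices at which some column of `M`
indexed by `J` has a one. -/
def SJ {n : ℕ} (M : Fin n → Fin n → Bool) (J : Finset (Fin n)) : Finset (Fin n) :=
  Finset.univ.filter fun i => ∃ j ∈ J, M i j = true

/-- Membership in the set `T₂`: `x ∈ AC⁺(p)` (with value `lam = λ_x ≥ 0`, unique since
`p < 1/2`) admitting a non-increasing rearrangement `i ↦ |x (π i)|` such that either
its `m₀`-th entry (1-indexed) is `0`, or it equals `1` and fewer than `2r` positions
`i > m₀` satisfy `|x^*_i - λ_x| ≥ 1/(2d)`. -/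
def memT2 (n d m₀ r : ℕ) (p : ℝ) (x : Fin n → ℝ) : Prop :=
  x ≠ 0 ∧ ∃ lam : ℝ,
    (1 - p) * n ≤ ((Finset.univ.filter fun i => x i = lam).card : ℝ) ∧
    0 ≤ lam ∧
    ∃ π : Equiv.Perm (Fin n),
      (∀ i j : Fin n, i ≤ j → |x (π j)| ≤ |x (π i)|) ∧
      ∃ i₀ : Fin n, (i₀ : ℕ) + 1 = m₀ ∧
        (|x (π i₀)| = 0 ∨
          (|x (π i₀)| = 1 ∧
            (Finset.univ.filter fun i : Fin n =>
              m₀ < (i : ℕ) + 1 ∧ 1 / (2 * d) ≤ |x (π i) - lam|).card < 2 * r))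

lemma card_filter_val_lt {n c : ℕ} (hc : c ≤ n) :
    (Finset.univ.filter (fun i : Fin n => (i:ℕ) < c)).card = c := by
  apply Finset.card_eq_of_bijective (fun i hi => ⟨i, lt_of_lt_of_le hi hc⟩)
  · intro a ha
    rw [Finset.mem_filter] at ha
    exact ⟨a, ha.2, rfl⟩
  · intro i hi
    rw [Finset.mem_filter]
    exact ⟨Finset.mem_univ _, hi⟩
  · intro i j hi hj h
    simpa using congrArg Fin.val h

lemma final_contra (d lam v : ℝ) (hd : 1 ≤ d) (hlam0 : 0 ≤ lam)
    (hlamlt : lam < 1/(2*d)) (hlow : 1 - lam ≤ v)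
    (habs2 : v ≤ d*lam + (d-1)*(1/(2*d))) : False := by
  have hd0 : (0:ℝ) < d := by linarith
  have hdt : d * (1/(2*d)) = 1/2 := by field_simp
  have he : (d-1) * (1/(2*d)) = d*(1/(2*d)) - 1/(2*d) := by ring
  have hlt : (d+1) * lam < (d+1) * (1/(2*d)) :=
    mul_lt_mul_of_pos_left hlamlt (by linarith)
  have he' : (d+1) * lam = d*lam + lam := by ring
  have he'' : (d+1) * (1/(2*d)) = d*(1/(2*d)) + 1/(2*d) := by ring
  linarith

lemma key_row {n d : ℕ} (M : Fin n → Fin n → Bool)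
    (hcol : ∀ j, (Finset.univ.filter fun i => M i j = true).card = d)
    (J B : Finset (Fin n)) (ε : ℝ)
    (hS : (1 - ε) * d * J.card ≤ ((SJ M J).card : ℝ))
    (hcond : (d : ℝ) * B.card < (1 - 2 * ε) * d * J.card) :
    ∃ i j, j ∈ J ∧ j ∉ B ∧ M i j = true ∧ ∀ k ∈ J, M i k = true → k = j := by
  classical
  set U := Finset.univ.filter fun i : Fin n => (J.filter fun j => M i j = true).card = 1 with hUdef
  -- total degree count
  have hdeg : ∑ i : Fin n, (J.filter fun j => M i j = true).card = d * J.card := by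
    have h1 : ∀ i : Fin n, (J.filter fun j => M i j = true).card
        = ∑ j ∈ J, if M i j = true then 1 else 0 := fun i => Finset.card_filter _ _
    calc ∑ i : Fin n, (J.filter fun j => M i j = true).card
        = ∑ i : Fin n, ∑ j ∈ J, if M i j = true then 1 else 0 := by
          exact Finset.sum_congr rfl fun i _ => h1 i
      _ = ∑ j ∈ J, ∑ i : Fin n, if M i j = true then 1 else 0 := Finset.sum_comm
      _ = ∑ j ∈ J, (Finset.univ.filter fun i => M i j = true).card := by
          exact Finset.sum_congr rfl fun j _ => (Finset.card_filter _ _).symm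
      _ = ∑ j ∈ J, d := Finset.sum_congr rfl fun j _ => hcol j
      _ = J.card * d := by rw [Finset.sum_const, smul_eq_mul]
      _ = d * J.card := mul_comm _ _
  have hUS : U ⊆ SJ M J := by
    intro i hi
    rw [hUdef, Finset.mem_filter] at hi
    have : (J.filter fun j => M i j = true).Nonempty := by
      rw [← Finset.card_pos, hi.2]; norm_num
    obtain ⟨j, hj⟩ := this
    rw [Finset.mem_filter] at hj
    simp only [SJ, Finset.mem_filter, Finset.mem_univ, true_and]
    exact ⟨j, hj.1, hj.2⟩
  -- 2 |S| ≤ d|J| + |U|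
  have hkey : 2 * (SJ M J).card ≤ d * J.card + U.card := by
    have hsub : ∑ i ∈ SJ M J, (J.filter fun j => M i j = true).card
        ≤ ∑ i : Fin n, (J.filter fun j => M i j = true).card :=
      Finset.sum_le_sum_of_subset (Finset.subset_univ _)
    have hsplit : ∑ i ∈ SJ M J \ U, (J.filter fun j => M i j = true).card
        + ∑ i ∈ U, (J.filter fun j => M i j = true).card
        = ∑ i ∈ SJ M J, (J.filter fun j => M i j = true).card :=
      Finset.sum_sdiff hUS
    have hUsum : ∑ i ∈ U, (J.filter fun j => M i j = true).card = U.card := by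
      rw [hUdef]
      rw [Finset.sum_congr rfl (fun i hi => (Finset.mem_filter.mp hi).2)]
      simp
    have h2 : ∀ i ∈ SJ M J \ U, 2 ≤ (J.filter fun j => M i j = true).card := by
      intro i hi
      rw [Finset.mem_sdiff] at hi
      have h1 : 1 ≤ (J.filter fun j => M i j = true).card := by
        rw [Nat.one_le_iff_ne_zero, ← Nat.pos_iff_ne_zero, Finset.card_pos]
        have := hi.1
        simp only [SJ, Finset.mem_filter, Finset.mem_univ, true_and] at this
        obtain ⟨j, hj1, hj2⟩ := this
        exact ⟨j, Finset.mem_filter.mpr ⟨hj1, hj2⟩⟩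
      have hne : (J.filter fun j => M i j = true).card ≠ 1 := by
        intro h; exact hi.2 (by rw [hUdef]; exact Finset.mem_filter.mpr ⟨Finset.mem_univ _, h⟩)
      omega
    have h2' : 2 * (SJ M J \ U).card ≤ ∑ i ∈ SJ M J \ U, (J.filter fun j => M i j = true).card := by
      calc 2 * (SJ M J \ U).card = ∑ i ∈ SJ M J \ U, 2 := by rw [Finset.sum_const, smul_eq_mul, mul_comm]
        _ ≤ _ := Finset.sum_le_sum h2
    have hcards : (SJ M J \ U).card + U.card = (SJ M J).card := Finset.card_sdiff_add_card_eq_card hUS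
    omega
  -- find the row
  have hUlb : (1 - 2*ε) * d * J.card ≤ (U.card : ℝ) := by
    have h1 : (2 : ℝ) * (SJ M J).card ≤ (d : ℝ) * J.card + U.card := by
      exact_mod_cast hkey
    nlinarith [hS]
  set UB := U.filter (fun i => ∃ j ∈ B, M i j = true) with hUBdef
  have hUBsub : UB ⊆ B.biUnion fun j => Finset.univ.filter fun i => M i j = true := by
    intro i hi
    rw [hUBdef, Finset.mem_filter] at hi
    obtain ⟨j, hj, hMij⟩ := hi.2
    exact Finset.mem_biUnion.mpr ⟨j, hj, Finset.mem_filter.mpr ⟨Finset.mem_univ _, hMij⟩⟩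
  have hUBcard : UB.card ≤ B.card * d := by
    calc UB.card ≤ (B.biUnion fun j => Finset.univ.filter fun i => M i j = true).card :=
          Finset.card_le_card hUBsub
      _ ≤ ∑ j ∈ B, (Finset.univ.filter fun i => M i j = true).card := Finset.card_biUnion_le
      _ = ∑ j ∈ B, d := Finset.sum_congr rfl fun j _ => hcol j
      _ = B.card * d := by rw [Finset.sum_const, smul_eq_mul]
  have hlt : UB.card < U.card := by
    have h1 : (UB.card : ℝ) ≤ (d : ℝ) * B.card := by
      have := hUBcard
      push_cast
      calc (UB.card : ℝ) ≤ (B.card : ℝ) * d := by exact_mod_cast hUBcard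
        _ = (d:ℝ) * B.card := mul_comm _ _
    have : (UB.card : ℝ) < (U.card : ℝ) := lt_of_le_of_lt h1 (lt_of_lt_of_le hcond hUlb)
    exact_mod_cast this
  have hex : ∃ i ∈ U, i ∉ UB := by
    by_contra h
    push_neg at h
    exact absurd (Finset.card_le_card h) (not_le.mpr hlt)
  obtain ⟨i, hiU, hiUB⟩ := hex
  rw [hUdef, Finset.mem_filter] at hiU
  obtain ⟨j, hj⟩ := Finset.card_eq_one.mp hiU.2
  have hjmem : j ∈ J.filter fun k => M i k = true := by rw [hj]; exact Finset.mem_singleton_self j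
  rw [Finset.mem_filter] at hjmem
  refine ⟨i, j, hjmem.1, ?_, hjmem.2, ?_⟩
  · intro hjB
    apply hiUB
    rw [hUBdef, Finset.mem_filter]
    refine ⟨?_, ⟨j, hjB, hjmem.2⟩⟩
    rw [hUdef, Finset.mem_filter]
    exact ⟨Finset.mem_univ _, hiU.2⟩
  · intro k hkJ hMik
    have : k ∈ J.filter fun k => M i k = true := Finset.mem_filter.mpr ⟨hkJ, hMik⟩
    rw [hj, Finset.mem_singleton] at this
    exact this

/-- Lemma 4.5 of the paper (with the expansion hypothesis made explicit via `κ`):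
if every column set `J` with `|J| ≤ κ` satisfies `|S_J| ≥ (1-ε) d |J|`, then
`M x ≠ 0` for every `x ∈ T₂`. -/
theorem lem_T2 (n d m₀ r : ℕ) (ε p κ : ℝ) (M : Fin n → Fin n → Bool)
    (hε0 : 0 < ε) (hε1 : ε < 1 / 4)
    (hp0 : 0 < p) (hp1 : p < 1 / 2)
    (hd1 : 1 ≤ d) (hdn : d ≤ n)
    (hm0 : 1 ≤ m₀) (hr : 1 ≤ r)
    (hm1 : ((m₀ + 2 * r : ℕ) : ℝ) < min ((m₀ : ℝ) / (2 * ε)) κ)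
    (hκ : κ * d ≤ n)
    (hM : M ∈ Mnd n d)
    (hexp : ∀ J : Finset (Fin n), (J.card : ℝ) ≤ κ →
      (1 - ε) * d * J.card ≤ ((SJ M J).card : ℝ)) :
    ∀ x : Fin n → ℝ, memT2 n d m₀ r p x → (toRealM M).mulVec x ≠ 0 := by
  intro x hx hMx
  obtain ⟨hx0, lam, hlamcard, hlam0, π, hmono, i₀, hi₀, hcase⟩ := hx
  obtain ⟨hrowc, hcolc⟩ := (Finset.mem_filter.mp hM).2
  have hd0 : (0:ℝ) < d := by exact_mod_cast hd1
  have hdR : (1:ℝ) ≤ d := by exact_mod_cast hd1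
  have hmv : ∀ i, ∑ j ∈ Finset.univ.filter (fun j => M i j = true), x j = 0 := by
    intro i
    have h := congrFun hMx i
    simp only [Matrix.mulVec, dotProduct, toRealM, Matrix.of_apply, Pi.zero_apply] at h
    calc ∑ j ∈ Finset.univ.filter (fun j => M i j = true), x j
        = ∑ j : Fin n, (if M i j = true then (1:ℝ) else 0) * x j := by
          rw [Finset.sum_filter]
          exact Finset.sum_congr rfl fun j _ => by by_cases hj : M i j = true <;> simp [hj]
      _ = 0 := h
  have hκm : ((m₀ : ℝ) + 2*r) < κ := by
    have h := (lt_min_iff.mp hm1).2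
    push_cast at h
    linarith
  have h2em : 2*ε*((m₀:ℝ) + 2*r) < m₀ := by
    have h := (lt_min_iff.mp hm1).1
    push_cast at h
    have h2e : (0:ℝ) < 2*ε := by linarith
    calc 2*ε*((m₀:ℝ) + 2*r) < 2*ε*((m₀:ℝ)/(2*ε)) := by
          exact mul_lt_mul_of_pos_left h h2e
      _ = m₀ := by field_simp
  rcases hcase with hzero | ⟨hone, hcnt⟩
  · -- Case 1 : m₀-th largest coordinate is 0
    set J := Finset.univ.filter (fun j => x j ≠ 0) with hJdef
    have hJne : J.Nonempty := by
      obtain ⟨j, hj⟩ := Function.ne_iff.mp hx0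
      exact ⟨j, by simp [hJdef]; exact hj⟩
    have hJsub : J ⊆ (Finset.univ.filter (fun i : Fin n => (i:ℕ) < (i₀:ℕ))).image π := by
      intro j hj
      rw [Finset.mem_image]
      refine ⟨π.symm j, ?_, π.apply_symm_apply j⟩
      rw [Finset.mem_filter]
      refine ⟨Finset.mem_univ _, ?_⟩
      by_contra h
      push_neg at h
      have hle : i₀ ≤ π.symm j := by rw [Fin.le_def]; omega
      have h2 := hmono i₀ (π.symm j) hle
      rw [π.apply_symm_apply, hzero] at h2
      have h3 : x j = 0 := abs_nonpos_iff.mp h2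
      rw [hJdef, Finset.mem_filter] at hj
      exact hj.2 h3
    have hJcard : J.card ≤ (i₀ : ℕ) := by
      calc J.card ≤ ((Finset.univ.filter (fun i : Fin n => (i:ℕ) < (i₀:ℕ))).image π).card :=
            Finset.card_le_card hJsub
        _ ≤ (Finset.univ.filter (fun i : Fin n => (i:ℕ) < (i₀:ℕ))).card := Finset.card_image_le
        _ = (i₀ : ℕ) := card_filter_val_lt (le_of_lt i₀.isLt)
    have hJκ : (J.card : ℝ) ≤ κ := by
      have h1 : (J.card : ℝ) ≤ (i₀:ℕ) := by exact_mod_cast hJcard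
      have : ((i₀:ℕ):ℝ) < (m₀:ℝ) := by
        have : ((i₀:ℕ):ℝ) + 1 = m₀ := by exact_mod_cast hi₀
        linarith
      have hr' : (0:ℝ) ≤ 2*r := by positivity
      linarith
    obtain ⟨i, j, hjJ, -, hMij, huniq⟩ := key_row M hcolc J ∅ ε (hexp J hJκ) (by
      have hc1 : (0:ℝ) < 1 - 2*ε := by linarith
      have hc2 : (0:ℝ) < J.card := by exact_mod_cast Finset.card_pos.mpr hJne
      simp only [Finset.card_empty, Nat.cast_zero, mul_zero]
      positivity)
    have hsum : ∑ k ∈ Finset.univ.filter (fun k => M i k = true), x k = x j := by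
      apply Finset.sum_eq_single_of_mem j
      · exact Finset.mem_filter.mpr ⟨Finset.mem_univ _, hMij⟩
      · intro k hk hkj
        by_contra hne
        have hkJ : k ∈ J := by rw [hJdef, Finset.mem_filter]; exact ⟨Finset.mem_univ _, hne⟩
        exact hkj (huniq k hkJ (Finset.mem_filter.mp hk).2)
    rw [hmv i] at hsum
    rw [hJdef, Finset.mem_filter] at hjJ
    exact hjJ.2 hsum.symm
  · -- Case 2 : m₀-th largest coordinate is 1, few large deviations
    have h2d : (0:ℝ) < 2*d := by positivity
    set A := Finset.univ.filter (fun j : Fin n => 1/(2*(d:ℝ)) ≤ |x j - lam|) with hAdef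
    set A' := Finset.univ.filter (fun i : Fin n => 1/(2*(d:ℝ)) ≤ |x (π i) - lam|) with hA'def
    have himg : A'.image π = A := by
      ext j
      simp only [hAdef, hA'def, Finset.mem_image, Finset.mem_filter, Finset.mem_univ, true_and]
      constructor
      · rintro ⟨i, hi, rfl⟩; exact hi
      · intro h; exact ⟨π.symm j, by rwa [π.apply_symm_apply], π.apply_symm_apply j⟩
    have hAcard : A.card = A'.card := by
      rw [← himg, Finset.card_image_of_injective _ π.injective]
    set T' := Finset.univ.filter (fun i : Fin n => (i:ℕ) < m₀) with hT'def
    have hm₀n : m₀ ≤ n := by have := i₀.isLt; omega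
    have hT'card : T'.card = m₀ := card_filter_val_lt hm₀n
    set F := Finset.univ.filter (fun i : Fin n =>
      m₀ < (i : ℕ) + 1 ∧ 1 / (2 * (d:ℝ)) ≤ |x (π i) - lam|) with hFdef
    have hFcnt : F.card < 2*r := hcnt
    have hA'sub : A' ⊆ T' ∪ F := by
      intro i hi
      rw [hA'def, Finset.mem_filter] at hi
      rcases lt_or_ge (i:ℕ) m₀ with h | h
      · exact Finset.mem_union_left _ (by rw [hT'def, Finset.mem_filter]; exact ⟨Finset.mem_univ _, h⟩)
      · exact Finset.mem_union_right _ (by rw [hFdef, Finset.mem_filter]; exact ⟨Finset.mem_univ _, by omega, hi.2⟩)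
    have hA'le : A'.card ≤ m₀ + F.card :=
      le_trans (Finset.card_le_card hA'sub) (le_trans (Finset.card_union_le _ _) (by omega))
    have hAκ : (A.card : ℝ) < κ := by
      have h1 : A.card < m₀ + 2*r := by omega
      have h2 : (A.card : ℝ) < ((m₀ + 2*r : ℕ) : ℝ) := by exact_mod_cast h1
      push_cast at h2
      linarith
    -- a row avoiding A gives lam < 1/(2d)
    have hSAle : (SJ M A).card ≤ A.card * d := by
      have hsub : SJ M A ⊆ A.biUnion fun j => Finset.univ.filter fun i => M i j = true := by
        intro i hi
        simp only [SJ, Finset.mem_filter, Finset.mem_univ, true_and] at hi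
        obtain ⟨j, hj, hMij⟩ := hi
        exact Finset.mem_biUnion.mpr ⟨j, hj, Finset.mem_filter.mpr ⟨Finset.mem_univ _, hMij⟩⟩
      calc (SJ M A).card ≤ _ := Finset.card_le_card hsub
        _ ≤ ∑ j ∈ A, (Finset.univ.filter fun i => M i j = true).card := Finset.card_biUnion_le
        _ = ∑ j ∈ A, d := Finset.sum_congr rfl fun j _ => hcolc j
        _ = A.card * d := by rw [Finset.sum_const, smul_eq_mul]
    have hSAn : (SJ M A).card < n := by
      have h1 : ((A.card * d : ℕ) : ℝ) < n := by
        push_cast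
        calc (A.card:ℝ) * d < κ * d := by exact mul_lt_mul_of_pos_right hAκ hd0
          _ ≤ n := hκ
      have h2 : A.card * d < n := by exact_mod_cast h1
      omega
    obtain ⟨i₁, hi₁⟩ : ∃ i, i ∉ SJ M A := by
      by_contra h
      push_neg at h
      have he : SJ M A = Finset.univ := Finset.eq_univ_iff_forall.mpr h
      rw [he, Finset.card_univ, Fintype.card_fin] at hSAn
      omega
    have hRne : (Finset.univ.filter (fun j => M i₁ j = true)).Nonempty := by
      rw [← Finset.card_pos, hrowc i₁]; omega
    have hsum1 : ∑ k ∈ Finset.univ.filter (fun j => M i₁ j = true), (x k - lam) = -((d:ℝ)*lam) := by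
      rw [Finset.sum_sub_distrib, hmv i₁, Finset.sum_const, hrowc i₁]
      push_cast
      ring
    have hlamlt : lam < 1/(2*(d:ℝ)) := by
      have habs : (d:ℝ)*lam ≤ ∑ k ∈ Finset.univ.filter (fun j => M i₁ j = true), |x k - lam| := by
        calc (d:ℝ)*lam = |∑ k ∈ Finset.univ.filter (fun j => M i₁ j = true), (x k - lam)| := by
              rw [hsum1, abs_neg, abs_of_nonneg (by positivity)]
          _ ≤ _ := Finset.abs_sum_le_sum_abs _ _
      have hstrict : ∑ k ∈ Finset.univ.filter (fun j => M i₁ j = true), |x k - lam|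
          < ∑ k ∈ Finset.univ.filter (fun j => M i₁ j = true), 1/(2*(d:ℝ)) := by
        apply Finset.sum_lt_sum_of_nonempty hRne
        intro k hk
        have hkA : k ∉ A := by
          intro hkA
          apply hi₁
          simp only [SJ, Finset.mem_filter, Finset.mem_univ, true_and]
          exact ⟨k, hkA, (Finset.mem_filter.mp hk).2⟩
        rw [hAdef, Finset.mem_filter, not_and] at hkA
        have := hkA (Finset.mem_univ _)
        linarith [not_le.mp this]
      have hconst : ∑ k ∈ Finset.univ.filter (fun j => M i₁ j = true), 1/(2*(d:ℝ))
          = (d:ℝ) * (1/(2*(d:ℝ))) := by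
        rw [Finset.sum_const, hrowc i₁, nsmul_eq_mul]
      rw [hconst] at hstrict
      exact lt_of_mul_lt_mul_left (lt_of_le_of_lt habs hstrict) (le_of_lt hd0)
    have h1d : 1/(2*(d:ℝ)) ≤ 1/2 := by
      apply one_div_le_one_div_of_le <;> linarith
    have hT'A' : T' ⊆ A' := by
      intro i hi
      rw [hT'def, Finset.mem_filter] at hi
      have hle : i ≤ i₀ := by rw [Fin.le_def]; omega
      have h1 : 1 ≤ |x (π i)| := by rw [← hone]; exact hmono i i₀ hle
      rw [hA'def, Finset.mem_filter]
      refine ⟨Finset.mem_univ _, ?_⟩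
      have h2 := abs_sub_abs_le_abs_sub (x (π i)) lam
      rw [abs_of_nonneg hlam0] at h2
      linarith
    set B' := A' \ T' with hB'def
    have hB'F : B' ⊆ F := by
      intro i hi
      simp only [hB'def, hA'def, hT'def, Finset.mem_sdiff, Finset.mem_filter, Finset.mem_univ,
        true_and] at hi
      simp only [hFdef, Finset.mem_filter, Finset.mem_univ, true_and]
      exact ⟨by omega, hi.1⟩
    have hB'card : B'.card + 1 ≤ 2*r := by
      have := Finset.card_le_card hB'F
      omega
    have hA'eq : A'.card = B'.card + m₀ := by
      have h := Finset.card_sdiff_add_card_eq_card hT'A'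
      rw [← hB'def] at h
      omega
    have hcond : (d : ℝ) * (B'.image π).card < (1 - 2 * ε) * d * A.card := by
      have hic : (B'.image π).card = B'.card := Finset.card_image_of_injective _ π.injective
      rw [hic, hAcard, hA'eq]
      obtain ⟨b, hb⟩ : ∃ b, B'.card = b := ⟨_, rfl⟩
      rw [hb] at hB'card ⊢
      have hbr : (b : ℝ) + 1 ≤ 2*r := by exact_mod_cast hB'card
      have hm0R : (1:ℝ) ≤ m₀ := by exact_mod_cast hm0
      have hgoal' : (b:ℝ) < (1-2*ε)*((b:ℝ)+(m₀:ℝ)) := by nlinarith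
      have h2 : (d:ℝ) * (b:ℝ) < (d:ℝ) * ((1-2*ε)*((b:ℝ)+(m₀:ℝ))) :=
        mul_lt_mul_of_pos_left hgoal' hd0
      push_cast
      linarith [h2]
    obtain ⟨i, j, hjA, hjB, hMij, huniq⟩ := key_row M hcolc A (B'.image π) ε (hexp A (le_of_lt hAκ)) hcond
    -- j is among the top m₀ columns
    have hxj1 : 1 ≤ |x j| := by
      have hi'A' : π.symm j ∈ A' := by
        rw [hA'def, Finset.mem_filter]
        rw [hAdef, Finset.mem_filter] at hjA
        exact ⟨Finset.mem_univ _, by rw [π.apply_symm_apply]; exact hjA.2⟩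
      have hi'T' : π.symm j ∈ T' := by
        by_contra h
        exact hjB (Finset.mem_image.mpr ⟨π.symm j,
          by rw [hB'def, Finset.mem_sdiff]; exact ⟨hi'A', h⟩, π.apply_symm_apply j⟩)
      rw [hT'def, Finset.mem_filter] at hi'T'
      have hle : π.symm j ≤ i₀ := by rw [Fin.le_def]; omega
      have := hmono (π.symm j) i₀ hle
      rw [π.apply_symm_apply, hone] at this
      linarith [this]
    -- the row i gives a contradiction
    have hjR : j ∈ Finset.univ.filter (fun k => M i k = true) :=
      Finset.mem_filter.mpr ⟨Finset.mem_univ _, hMij⟩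
    have hsum2 : ∑ k ∈ Finset.univ.filter (fun k => M i k = true), (x k - lam) = -((d:ℝ)*lam) := by
      rw [Finset.sum_sub_distrib, hmv i, Finset.sum_const, hrowc i]
      push_cast
      ring
    have hsplit : (x j - lam) + ∑ k ∈ (Finset.univ.filter (fun k => M i k = true)).erase j, (x k - lam)
        = -((d:ℝ)*lam) := by
      have h := Finset.add_sum_erase (Finset.univ.filter (fun k => M i k = true))
        (fun k => x k - lam) hjR
      rw [hsum2] at h
      exact h
    have herase : ∑ k ∈ (Finset.univ.filter (fun k => M i k = true)).erase j, |x k - lam|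
        ≤ ((d:ℝ) - 1) * (1/(2*(d:ℝ))) := by
      have hcard : ((Finset.univ.filter (fun k => M i k = true)).erase j).card = d - 1 := by
        rw [Finset.card_erase_of_mem hjR, hrowc i]
      have hbd : ∀ k ∈ (Finset.univ.filter (fun k => M i k = true)).erase j,
          |x k - lam| ≤ 1/(2*(d:ℝ)) := by
        intro k hk
        rw [Finset.mem_erase] at hk
        have hkA : k ∉ A := by
          intro hkA
          exact hk.1 (huniq k hkA (Finset.mem_filter.mp hk.2).2)
        rw [hAdef, Finset.mem_filter, not_and] at hkA
        have := hkA (Finset.mem_univ _)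
        linarith [not_le.mp this]
      calc ∑ k ∈ (Finset.univ.filter (fun k => M i k = true)).erase j, |x k - lam|
          ≤ ((Finset.univ.filter (fun k => M i k = true)).erase j).card • (1/(2*(d:ℝ))) :=
            Finset.sum_le_card_nsmul _ _ _ hbd
        _ = ((d:ℝ) - 1) * (1/(2*(d:ℝ))) := by
            rw [hcard, nsmul_eq_mul, Nat.cast_sub hd1, Nat.cast_one]
    obtain ⟨Sm, hSm⟩ : ∃ Sm, ∑ k ∈ (Finset.univ.filter (fun k => M i k = true)).erase j, (x k - lam) = Sm := ⟨_, rfl⟩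
    have habsS : |Sm| ≤ ((d:ℝ) - 1) * (1/(2*(d:ℝ))) := by
      rw [← hSm]
      exact le_trans (Finset.abs_sum_le_sum_abs _ _) herase
    rw [hSm] at hsplit
    have habs2 : |x j - lam| ≤ (d:ℝ)*lam + ((d:ℝ) - 1) * (1/(2*(d:ℝ))) := by
      have h1 : x j - lam = -((d:ℝ)*lam) - Sm := by linarith [hsplit]
      rw [h1]
      calc |(-((d:ℝ)*lam) - Sm)| ≤ |(-((d:ℝ)*lam))| + |Sm| := abs_sub _ _
        _ ≤ (d:ℝ)*lam + ((d:ℝ) - 1) * (1/(2*(d:ℝ))) := by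
            rw [abs_neg, abs_of_nonneg (by positivity : (0:ℝ) ≤ (d:ℝ)*lam)]
            linarith [habsS]
    have hlow : 1 - lam ≤ |x j - lam| := by
      have h2 := abs_sub_abs_le_abs_sub (x j) lam
      rw [abs_of_nonneg hlam0] at h2
      linarith
    exact final_contra (d:ℝ) lam _ hdR hlam0 hlamlt hlow habs2
end

section
/- Let d ≥ 1 and 1 ≤ k ≤ d be integers, and let x ∈ ℝ^{2d} and J ⊆ [2d] be such that |J| = k and x_i ≠ x_j for every i ∈ J and every j ∉ J. Let π be a uniformly random permutation of [2d], and let N(π) = |{i ∈ [d] : x_{π(i)} ≠ x_{π(i+d)}}|. Then P(N(π) ≤ k/50) ≤ (k/(1.1·d))^{k/3}. -/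
open Finset
open scoped Classical

lemma card_perm_maps_le {α : Type*} [Fintype α] [DecidableEq α] (A B : Finset α) :
    ((univ.filter fun π : Equiv.Perm α => ∀ a ∈ A, π a ∈ B).card) ≤
      B.card.descFactorial A.card * Nat.factorial (Fintype.card α - A.card) := by
  classical
  rw [← Fintype.card_subtype]
  have hcard : Fintype.card ((↥A ↪ ↥B) × Equiv.Perm {x : α // x ∉ A}) =
      B.card.descFactorial A.card * Nat.factorial (Fintype.card α - A.card) := by
    rw [Fintype.card_prod, Fintype.card_embedding_eq, Fintype.card_perm, Fintype.card_coe,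
      Fintype.card_coe]
    congr 2
    have : Fintype.card {x : α // x ∉ A} = Fintype.card α - Fintype.card {x : α // x ∈ A} :=
      Fintype.card_subtype_compl _
    rw [this, Fintype.card_coe]
  rw [← hcard]
  set S := {π : Equiv.Perm α // ∀ a ∈ A, π a ∈ B}
  let res : S → (↥A ↪ ↥B) := fun s =>
    ⟨fun a => ⟨s.1 a, s.2 a a.2⟩,
      fun a b hab => Subtype.ext (s.1.injective (congrArg Subtype.val hab))⟩
  let pick : (↥A ↪ ↥B) → Equiv.Perm α := fun f =>
    if h : ∃ π : Equiv.Perm α, ∀ a : ↥A, π ↑a = ↑(f a) then h.choose else 1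
  have pick_spec : ∀ s : S, ∀ a : ↥A, pick (res s) ↑a = s.1 ↑a := by
    intro s a
    have h : ∃ π : Equiv.Perm α, ∀ a : ↥A, π ↑a = ↑(res s a) := ⟨s.1, fun a => rfl⟩
    simp only [pick, dif_pos h]
    exact h.choose_spec a
  let tau : S → Equiv.Perm α := fun s => (pick (res s))⁻¹ * s.1
  have tau_fix : ∀ s : S, ∀ a ∈ A, tau s a = a := by
    intro s a ha
    have h := pick_spec s ⟨a, ha⟩
    simp only [tau, Equiv.Perm.mul_apply]
    rw [← h]
    simp
  have tau_mem : ∀ s : S, ∀ x : α, x ∉ A ↔ tau s x ∉ A := by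
    intro s x
    constructor
    · intro hx hmem
      have h1 : tau s (tau s x) = tau s x := tau_fix s _ hmem
      have := (tau s).injective h1
      rw [this] at hmem
      exact hx hmem
    · intro hx hmem
      exact hx (by rw [tau_fix s x hmem]; exact hmem)
  let Φ : S → (↥A ↪ ↥B) × Equiv.Perm {x : α // x ∉ A} :=
    fun s => (res s, (tau s).subtypePerm (fun x => (tau_mem s x).symm))
  have hinj : Function.Injective Φ := by
    intro s t h
    have h1 : res s = res t := congrArg Prod.fst h
    have h2 := congrArg Prod.snd h
    simp only [Φ] at h2
    have htau : tau s = tau t := by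
      apply Equiv.ext
      intro x
      by_cases hx : x ∈ A
      · rw [tau_fix s x hx, tau_fix t x hx]
      · have := Equiv.ext_iff.mp h2 ⟨x, hx⟩
        exact congrArg Subtype.val this
    have hs : s.1 = pick (res s) * tau s := by
      simp [tau]
    have ht : t.1 = pick (res t) * tau t := by
      simp [tau]
    apply Subtype.ext
    rw [hs, ht, h1, htau]
  exact Fintype.card_le_of_injective Φ hinj

-- L1 : r^r ≤ 3^r * r!
lemma pow_self_le_three_pow_mul_factorial : ∀ r : ℕ, (r:ℝ)^r ≤ 3^r * (Nat.factorial r) := by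
  intro r
  induction r with
  | zero => simp
  | succ r ih =>
    have h3 : ((r:ℝ)+1)^r ≤ 3 * (r:ℝ)^r := by
      rcases Nat.eq_zero_or_pos r with hr | hr
      · subst hr; norm_num
      · have hrpos : (0:ℝ) < r := by exact_mod_cast hr
        have h1 : (r:ℝ) + 1 ≤ (r:ℝ) * Real.exp (1/(r:ℝ)) := by
          have h := Real.add_one_le_exp (1/(r:ℝ))
          have : (r:ℝ) * (1/(r:ℝ) + 1) ≤ (r:ℝ) * Real.exp (1/(r:ℝ)) :=
            mul_le_mul_of_nonneg_left h (le_of_lt hrpos)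
          calc (r:ℝ) + 1 = (r:ℝ) * (1/(r:ℝ) + 1) := by field_simp; ring
            _ ≤ (r:ℝ) * Real.exp (1/(r:ℝ)) := this
        have h2 : ((r:ℝ)+1)^r ≤ ((r:ℝ) * Real.exp (1/(r:ℝ)))^r :=
          pow_le_pow_left₀ (by positivity) h1 r
        have h4 : ((r:ℝ) * Real.exp (1/(r:ℝ)))^r = (r:ℝ)^r * Real.exp 1 := by
          rw [mul_pow, ← Real.exp_nat_mul]
          congr 2
          field_simp
        have h5 : Real.exp 1 ≤ 3 := by
          have := Real.exp_one_lt_d9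
          linarith
        calc ((r:ℝ)+1)^r ≤ (r:ℝ)^r * Real.exp 1 := by rw [← h4]; exact h2
          _ ≤ (r:ℝ)^r * 3 := mul_le_mul_of_nonneg_left h5 (by positivity)
          _ = 3 * (r:ℝ)^r := by ring
    have goal' : ((r:ℝ)+1)^(r+1) ≤ 3^(r+1) * (((r:ℝ)+1) * Nat.factorial r) := by
      calc ((r:ℝ)+1)^(r+1) = ((r:ℝ)+1) * ((r:ℝ)+1)^r := by ring
        _ ≤ ((r:ℝ)+1) * (3 * (r:ℝ)^r) := mul_le_mul_of_nonneg_left h3 (by positivity)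
        _ ≤ ((r:ℝ)+1) * (3 * (3^r * Nat.factorial r)) := by
            apply mul_le_mul_of_nonneg_left (mul_le_mul_of_nonneg_left ih (by norm_num))
              (by positivity)
        _ = 3^(r+1) * (((r:ℝ)+1) * Nat.factorial r) := by ring
    rw [Nat.factorial_succ]
    push_cast
    push_cast at goal'
    convert goal' using 2 <;> ring

-- L2 : n^k ≤ k^k * C(n,k)  (ℕ)
lemma pow_le_pow_mul_choose : ∀ (k n : ℕ), k ≤ n → n^k ≤ k^k * n.choose k := by
  intro k
  induction k with
  | zero => intro n _; simp
  | succ k ih =>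
    intro n hn
    obtain ⟨n', rfl⟩ : ∃ n', n = n' + 1 := ⟨n - 1, by omega⟩
    have hkn' : k ≤ n' := by omega
    rcases Nat.eq_zero_or_pos k with hk0 | hkpos
    · subst hk0; simp [Nat.choose_one_right]
    have hkk : 0 < k^k := pow_pos hkpos k
    have key : (n' + 1) * Nat.choose n' k = Nat.choose (n'+1) (k+1) * (k+1) := by
      simpa [Nat.succ_eq_add_one] using Nat.add_one_mul_choose_eq n' k
    apply Nat.le_of_mul_le_mul_left _ hkk
    have c2 : k*(n'+1) ≤ (k+1)*n' := by
      calc k*(n'+1) = k*n' + k := by ring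
        _ ≤ k*n' + n' := by omega
        _ = (k+1)*n' := by ring
    calc k^k * (n'+1)^(k+1)
        = (k*(n'+1))^k * (n'+1) := by rw [mul_pow]; ring
      _ ≤ ((k+1)*n')^k * (n'+1) := by
          exact Nat.mul_le_mul_right _ (Nat.pow_le_pow_left c2 k)
      _ = (k+1)^k * n'^k * (n'+1) := by rw [mul_pow]
      _ ≤ (k+1)^k * (k^k * Nat.choose n' k) * (n'+1) := by
          exact Nat.mul_le_mul_right _ (Nat.mul_le_mul_left _ (ih n' hkn'))
      _ = (k+1)^k * k^k * ((n'+1) * Nat.choose n' k) := by ring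
      _ = (k+1)^k * k^k * (Nat.choose (n'+1) (k+1) * (k+1)) := by rw [key]
      _ = k^k * ((k+1)^(k+1) * Nat.choose (n'+1) (k+1)) := by ring

-- L3
lemma choose_le_rpow (k r : ℕ) (hk : 1 ≤ k) (hr : 50*r ≤ k) :
    (Nat.choose k r : ℝ) ≤ (150:ℝ) ^ ((k:ℝ)/50) := by
  have hu0 : (0:ℝ) ≤ (k:ℝ)/50 := by positivity
  have hone : (1:ℝ) ≤ (150:ℝ) ^ ((k:ℝ)/50) := by
    rw [← Real.rpow_zero 150]
    exact Real.rpow_le_rpow_of_exponent_le (by norm_num) hu0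
  rcases Nat.eq_zero_or_pos r with hr0 | hrpos
  · subst hr0; simpa using hone
  set u : ℝ := (k:ℝ)/50 with hu
  have hrR : (0:ℝ) < r := by exact_mod_cast hrpos
  have hur : (r:ℝ) ≤ u := by
    rw [hu, le_div_iff₀ (by norm_num : (0:ℝ) < 50)]
    calc (r:ℝ)*50 = ((50*r : ℕ) : ℝ) := by push_cast; ring
      _ ≤ k := by exact_mod_cast hr
  have hku : (k:ℝ) = 50 * u := by rw [hu]; field_simp
  -- (u/r)^r ≤ exp (u - r)
  have hstep : (u/(r:ℝ))^r ≤ Real.exp (u - r) := by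
    have h1 : u/(r:ℝ) ≤ Real.exp (u/(r:ℝ) - 1) := by
      have := Real.add_one_le_exp (u/(r:ℝ) - 1)
      linarith
    have h2 : (u/(r:ℝ))^r ≤ (Real.exp (u/(r:ℝ) - 1))^r :=
      pow_le_pow_left₀ (by positivity) h1 r
    have h3 : (Real.exp (u/(r:ℝ) - 1))^r = Real.exp ((r:ℝ) * (u/(r:ℝ) - 1)) := by
      rw [← Real.exp_nat_mul]
    have h4 : (r:ℝ) * (u/(r:ℝ) - 1) = u - r := by field_simp
    rw [h3, h4] at h2
    exact h2
  -- k^r ≤ (50 r)^r * exp (u - r)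
  have hkr : (k:ℝ)^r ≤ (50*(r:ℝ))^r * Real.exp (u - r) := by
    have : (k:ℝ)^r = (50*(r:ℝ))^r * (u/(r:ℝ))^r := by
      rw [← mul_pow]
      congr 1
      rw [hku]; field_simp
    rw [this]
    exact mul_le_mul_of_nonneg_left hstep (by positivity)
  -- (50 r)^r ≤ 150^r * r!
  have h50 : (50*(r:ℝ))^r ≤ 150^r * (Nat.factorial r) := by
    have := pow_self_le_three_pow_mul_factorial r
    calc (50*(r:ℝ))^r = 50^r * (r:ℝ)^r := by rw [mul_pow]
      _ ≤ 50^r * (3^r * (Nat.factorial r)) := by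
          exact mul_le_mul_of_nonneg_left this (by positivity)
      _ = 150^r * (Nat.factorial r) := by rw [← mul_assoc, ← mul_pow]; norm_num
  -- exp (u - r) ≤ 150 ^ (u - r)
  have hexp : Real.exp (u - r) ≤ (150:ℝ) ^ (u - (r:ℝ)) := by
    rw [Real.rpow_def_of_pos (by norm_num : (0:ℝ) < 150)]
    apply Real.exp_le_exp.mpr
    have hlog : (1:ℝ) ≤ Real.log 150 := by
      rw [Real.le_log_iff_exp_le (by norm_num : (0:ℝ) < 150)]
      have := Real.exp_one_lt_d9
      linarith
    nlinarith [sub_nonneg.mpr hur]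
  -- combine : k^r ≤ r! * 150^u
  have hcomb : (k:ℝ)^r ≤ (Nat.factorial r) * (150:ℝ)^u := by
    calc (k:ℝ)^r ≤ (50*(r:ℝ))^r * Real.exp (u - r) := hkr
      _ ≤ (150^r * (Nat.factorial r)) * ((150:ℝ) ^ (u - (r:ℝ))) := by
          apply mul_le_mul h50 hexp (by positivity) (by positivity)
      _ = (Nat.factorial r) * ((150:ℝ)^((r:ℕ):ℝ) * (150:ℝ) ^ (u - (r:ℝ))) := by
          rw [Real.rpow_natCast]; ring
      _ = (Nat.factorial r) * (150:ℝ)^u := by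
          rw [← Real.rpow_add (by norm_num : (0:ℝ) < 150)]
          congr 1
          ring
  have hfac : (0:ℝ) < (Nat.factorial r : ℝ) := by exact_mod_cast Nat.factorial_pos r
  calc (Nat.choose k r : ℝ) ≤ (k:ℝ)^r / (Nat.factorial r) := Nat.choose_le_pow_div r k
    _ ≤ (150:ℝ)^u := by
        rw [div_le_iff₀ hfac]
        calc (k:ℝ)^r ≤ (Nat.factorial r) * (150:ℝ)^u := hcomb
          _ = (150:ℝ)^u * (Nat.factorial r) := by ring

-- helper for L4
lemma hbig_aux (t : ℝ) (ht0 : 0 < t) (ht1 : t ≤ 1) :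
    (150:ℝ)^(6:ℕ) * (t/2)^(147:ℕ) ≤ (t/1.1)^(100:ℕ) := by
  have h1 : ((t:ℝ)/2)^(147:ℕ) = t^147 / 2^147 := div_pow t 2 147
  have h2 : ((t:ℝ)/1.1)^(100:ℕ) = t^100 / 1.1^100 := div_pow t 1.1 100
  rw [h1, h2, ← mul_div_assoc, div_le_div_iff₀ (by positivity) (by positivity)]
  have hc : (150:ℝ)^6 * (1.1:ℝ)^100 ≤ 2^147 := by norm_num
  have ht47 : t^47 ≤ 1 := pow_le_one₀ (le_of_lt ht0) ht1
  have hsplit : t^147 = t^47 * t^100 := by rw [← pow_add]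
  calc (150:ℝ)^6 * t^147 * 1.1^100 = (150^6 * 1.1^100) * t^47 * t^100 := by
        rw [hsplit]; ring
    _ ≤ (2^147) * 1 * t^100 := by
        apply mul_le_mul_of_nonneg_right _ (by positivity)
        apply mul_le_mul hc ht47 (by positivity) (by positivity)
    _ = t^100 * 2^147 := by ring

-- L4
lemma final_ineq (k d : ℕ) (hk : 1 ≤ k) (hkd : k ≤ d) :
    (150:ℝ)^((k:ℝ)/50) * ((k:ℝ)/(2*(d:ℝ)))^((49*(k:ℝ))/100) ≤
      ((k:ℝ)/(1.1*(d:ℝ)))^((k:ℝ)/3) := by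
  have hd0 : (0:ℝ) < d := by exact_mod_cast (hk.trans hkd)
  have hk0 : (0:ℝ) < k := by exact_mod_cast hk
  set t : ℝ := (k:ℝ)/(d:ℝ) with htdef
  have ht0 : 0 < t := by positivity
  have ht1 : t ≤ 1 := by
    rw [htdef, div_le_one hd0]
    exact_mod_cast hkd
  set c : ℝ := (k:ℝ)/300 with hcdef
  have hc0 : (0:ℝ) ≤ c := by positivity
  have key := Real.rpow_le_rpow (by positivity) (hbig_aux t ht0 ht1) hc0
  have hE1 : (6:ℝ)*c = (k:ℝ)/50 := by rw [hcdef]; ring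
  have hE2 : (147:ℝ)*c = (49*(k:ℝ))/100 := by rw [hcdef]; ring
  have hE3 : (100:ℝ)*c = (k:ℝ)/3 := by rw [hcdef]; ring
  have et2 : t/2 = (k:ℝ)/(2*(d:ℝ)) := by rw [htdef, div_div, mul_comm]
  have et3 : t/1.1 = (k:ℝ)/(1.1*(d:ℝ)) := by rw [htdef, div_div, mul_comm]
  have e1 : ((150:ℝ)^(6:ℕ) * (t/2)^(147:ℕ)) ^ c
      = (150:ℝ)^((k:ℝ)/50) * ((k:ℝ)/(2*(d:ℝ)))^((49*(k:ℝ))/100) := by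
    rw [Real.mul_rpow (by positivity) (by positivity),
      ← Real.rpow_natCast (150:ℝ) 6, ← Real.rpow_natCast (t/2) 147,
      ← Real.rpow_mul (by norm_num : (0:ℝ) ≤ 150),
      ← Real.rpow_mul (by positivity : (0:ℝ) ≤ t/2)]
    push_cast
    rw [hE1, hE2, et2]
  have e2 : ((t/1.1)^(100:ℕ)) ^ c = ((k:ℝ)/(1.1*(d:ℝ)))^((k:ℝ)/3) := by
    rw [← Real.rpow_natCast (t/1.1) 100,
      ← Real.rpow_mul (by positivity : (0:ℝ) ≤ t/1.1)]
    push_cast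
    rw [hE3, et3]
  rw [e1, e2] at key
  exact key

def loF (d : ℕ) (i : Fin d) : Fin (2*d) := ⟨i.1, by have := i.2; omega⟩
def hiF (d : ℕ) (i : Fin d) : Fin (2*d) := ⟨i.1 + d, by have := i.2; omega⟩

section Count
variable {d k : ℕ} (x : Fin (2*d) → ℝ) (J : Finset (Fin (2*d)))

lemma loF_inj : Function.Injective (loF d) := by
  intro a b h
  apply Fin.ext
  have := congrArg Fin.val h
  simpa [loF] using this

lemma hiF_inj : Function.Injective (hiF d) := by
  intro a b h
  apply Fin.ext
  have := congrArg Fin.val h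
  simpa [hiF] using this

lemma split_univ :
    (univ : Finset (Fin (2*d))) = univ.image (loF d) ∪ univ.image (hiF d) := by
  ext j
  simp only [mem_univ, mem_union, mem_image, true_iff, true_and]
  by_cases hj : j.1 < d
  · exact Or.inl ⟨⟨j.1, hj⟩, Fin.ext rfl⟩
  · refine Or.inr ⟨⟨j.1 - d, by have := j.2; omega⟩, Fin.ext ?_⟩
    have := j.2
    simp only [hiF]
    omega

lemma disj_images : Disjoint (univ.image (loF d)) (univ.image (hiF d)) := by
  rw [Finset.disjoint_left]
  intro a ha hb
  obtain ⟨i, -, rfl⟩ := Finset.mem_image.mp ha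
  obtain ⟨j, -, hj⟩ := Finset.mem_image.mp hb
  have h1 : (loF d i).1 = i.1 := rfl
  have h2 := congrArg Fin.val hj
  simp only [hiF, loF] at h2
  have := i.2
  have := j.2
  omega

/-- key split count : for any permutation, `|J| = |P| + |Q|`. -/
lemma card_split (hJ : J.card = k) (π : Equiv.Perm (Fin (2*d))) :
    (univ.filter fun i : Fin d => π (loF d i) ∈ J).card +
    (univ.filter fun i : Fin d => π (hiF d i) ∈ J).card = k := by
  have h1 : (univ.filter fun j : Fin (2*d) => π j ∈ J) = J.image ⇑π.symm := by
    ext j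
    simp only [mem_filter, mem_univ, true_and, Finset.mem_image]
    constructor
    · intro h; exact ⟨π j, h, by simp⟩
    · rintro ⟨b, hb, rfl⟩; simpa using hb
  have h2 : (univ.filter fun j : Fin (2*d) => π j ∈ J).card = k := by
    rw [h1, Finset.card_image_of_injective _ π.symm.injective, hJ]
  rw [split_univ (d := d), Finset.filter_union,
    Finset.card_union_of_disjoint (Finset.disjoint_filter_filter disj_images)] at h2
  rw [← h2]
  congr 1
  · rw [Finset.filter_image, Finset.card_image_of_injective _ loF_inj]
  · rw [Finset.filter_image, Finset.card_image_of_injective _ hiF_inj]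

end Count


/-- Lemma 4.10 of the paper: for a uniformly random permutation `π` of `[2d]`, the
number `N(π)` of indices `i ∈ [d]` with `x_{π(i)} ≠ x_{π(i+d)}` is rarely below `k/50`.
Here `i ∈ [d]` (1-indexed) corresponds to `i : Fin d`, the position `i` in `[2d]` to
`⟨i, _⟩ : Fin (2d)` and the position `i + d` to `⟨i + d, _⟩ : Fin (2d)`. -/
theorem lem_pi (d k : ℕ) (x : Fin (2 * d) → ℝ) (J : Finset (Fin (2 * d)))
    (hd : 1 ≤ d) (hk1 : 1 ≤ k) (hkd : k ≤ d)
    (hJ : J.card = k)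
    (hsep : ∀ i ∈ J, ∀ j ∉ J, x i ≠ x j) :
    (((Finset.univ : Finset (Equiv.Perm (Fin (2 * d)))).filter fun π =>
        (((Finset.univ : Finset (Fin d)).filter fun i =>
          x (π ⟨i.1, by have := i.2; omega⟩) ≠
            x (π ⟨i.1 + d, by have := i.2; omega⟩)).card : ℝ) ≤ k / 50).card : ℝ) /
      (Fintype.card (Equiv.Perm (Fin (2 * d))) : ℝ)
      ≤ (k / (1.1 * d)) ^ ((k : ℝ) / 3) := by

  classical
  set m : ℕ := (49*k + 99) / 100 with hm
  have hm1 : 1 ≤ m := by omega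
  have hm49 : 49*k ≤ 100*m := by omega
  set E := ((Finset.univ : Finset (Equiv.Perm (Fin (2 * d)))).filter fun π =>
        (((Finset.univ : Finset (Fin d)).filter fun i =>
          x (π ⟨i.1, by have := i.2; omega⟩) ≠
            x (π ⟨i.1 + d, by have := i.2; omega⟩)).card : ℝ) ≤ k / 50) with hE
  -- Step 1: union bound at the level of natural numbers
  set U := (Finset.powersetCard m (univ : Finset (Fin d))).biUnion
      (fun T => univ.filter fun π : Equiv.Perm (Fin (2*d)) =>
        ∀ i ∈ T, π (loF d i) ∈ J ∧ π (hiF d i) ∈ J) with hU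
  have hEU : E ⊆ U := by
    intro π hπ
    rw [hE, Finset.mem_filter] at hπ
    obtain ⟨-, hN⟩ := hπ
    set P := (univ.filter fun i : Fin d => π (loF d i) ∈ J) with hP
    set Q := (univ.filter fun i : Fin d => π (hiF d i) ∈ J) with hQ
    have hPQ : P.card + Q.card = k := card_split J hJ π
    -- split pairs are counted by N
    have hsplitN : ((P ∪ Q) \ (P ∩ Q)) ⊆
        ((Finset.univ : Finset (Fin d)).filter fun i =>
          x (π ⟨i.1, by have := i.2; omega⟩) ≠
            x (π ⟨i.1 + d, by have := i.2; omega⟩)) := by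
      intro i hi
      rw [Finset.mem_sdiff, Finset.mem_union, Finset.mem_inter] at hi
      obtain ⟨hor, hnand⟩ := hi
      rw [Finset.mem_filter]
      refine ⟨Finset.mem_univ _, ?_⟩
      rw [hP, Finset.mem_filter] at *
      rw [hQ, Finset.mem_filter] at *
      rcases hor with h | h
      · have hQn : π (hiF d i) ∉ J := by
          intro hc
          exact hnand ⟨h, by simp [hQ, Finset.mem_filter, hc]⟩
        exact hsep _ h.2 _ hQn
      · have hPn : π (loF d i) ∉ J := by
          intro hc
          exact hnand ⟨by simp [hP, Finset.mem_filter, hc], h⟩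
        exact Ne.symm (hsep _ h.2 _ hPn)
    have hscount : (50 * ((P ∪ Q) \ (P ∩ Q)).card : ℝ) ≤ k := by
      have h1 := Finset.card_le_card hsplitN
      have h2 : (((P ∪ Q) \ (P ∩ Q)).card : ℝ) ≤ (k:ℝ)/50 := le_trans (by exact_mod_cast h1) hN
      linarith
    have hscountN : 50 * ((P ∪ Q) \ (P ∩ Q)).card ≤ k := by exact_mod_cast hscount
    have hDcard : m ≤ (P ∩ Q).card := by
      have hsub : P ∩ Q ⊆ P ∪ Q := (Finset.inter_subset_left).trans Finset.subset_union_left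
      have e1 : (P ∪ Q).card + (P ∩ Q).card = P.card + Q.card :=
        Finset.card_union_add_card_inter P Q
      have e2 : ((P ∪ Q) \ (P ∩ Q)).card = (P ∪ Q).card - (P ∩ Q).card :=
        Finset.card_sdiff_of_subset hsub
      have e3 : (P ∩ Q).card ≤ (P ∪ Q).card := Finset.card_le_card hsub
      omega
    obtain ⟨T, hTsub, hTcard⟩ := Finset.exists_subset_card_eq hDcard
    rw [hU, Finset.mem_biUnion]
    refine ⟨T, ?_, ?_⟩
    · rw [Finset.mem_powersetCard]
      exact ⟨Finset.subset_univ _, hTcard⟩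
    · rw [Finset.mem_filter]
      refine ⟨Finset.mem_univ _, fun i hiT => ?_⟩
      have := hTsub hiT
      rw [Finset.mem_inter, hP, hQ, Finset.mem_filter, Finset.mem_filter] at this
      exact ⟨this.1.2, this.2.2⟩
  have hUbound : U.card ≤ d.choose m * (Nat.descFactorial k (2*m) * Nat.factorial (2*d - 2*m)) := by
    rw [hU]
    apply le_trans (Finset.card_biUnion_le)
    have hterm : ∀ T ∈ Finset.powersetCard m (univ : Finset (Fin d)),
        (univ.filter fun π : Equiv.Perm (Fin (2*d)) =>
          ∀ i ∈ T, π (loF d i) ∈ J ∧ π (hiF d i) ∈ J).card ≤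
        Nat.descFactorial k (2*m) * Nat.factorial (2*d - 2*m) := by
      intro T hT
      rw [Finset.mem_powersetCard] at hT
      obtain ⟨-, hTcard⟩ := hT
      set A := T.image (loF d) ∪ T.image (hiF d) with hA
      have hAcard : A.card = 2*m := by
        rw [hA, Finset.card_union_of_disjoint, Finset.card_image_of_injective _ loF_inj,
          Finset.card_image_of_injective _ hiF_inj, hTcard]
        · omega
        · exact Finset.disjoint_of_subset_left (Finset.image_subset_image (Finset.subset_univ _))
            (Finset.disjoint_of_subset_right (Finset.image_subset_image (Finset.subset_univ _))
              disj_images)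
      have hsub : (univ.filter fun π : Equiv.Perm (Fin (2*d)) =>
            ∀ i ∈ T, π (loF d i) ∈ J ∧ π (hiF d i) ∈ J) ⊆
          (univ.filter fun π : Equiv.Perm (Fin (2*d)) => ∀ a ∈ A, π a ∈ J) := by
        intro π hπ
        rw [Finset.mem_filter] at *
        refine ⟨Finset.mem_univ _, fun a ha => ?_⟩
        rw [hA, Finset.mem_union] at ha
        rcases ha with h | h
        · obtain ⟨i, hi', rfl⟩ := Finset.mem_image.mp h
          exact (hπ.2 i hi').1
        · obtain ⟨i, hi', rfl⟩ := Finset.mem_image.mp h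
          exact (hπ.2 i hi').2
      calc (univ.filter fun π : Equiv.Perm (Fin (2*d)) =>
            ∀ i ∈ T, π (loF d i) ∈ J ∧ π (hiF d i) ∈ J).card
          ≤ (univ.filter fun π : Equiv.Perm (Fin (2*d)) => ∀ a ∈ A, π a ∈ J).card :=
            Finset.card_le_card hsub
        _ ≤ J.card.descFactorial A.card * Nat.factorial (Fintype.card (Fin (2*d)) - A.card) :=
            by
              convert card_perm_maps_le A J using 2
              ext π
              simp [Finset.mem_filter]
        _ = Nat.descFactorial k (2*m) * Nat.factorial (2*d - 2*m) := by
            rw [hJ, hAcard, Fintype.card_fin]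
    apply le_trans (Finset.sum_le_sum hterm)
    rw [Finset.sum_const, Finset.card_powersetCard, Finset.card_univ, Fintype.card_fin,
      smul_eq_mul]
  have hEbound : E.card ≤ d.choose m * (Nat.descFactorial k (2*m) * Nat.factorial (2*d - 2*m)) :=
    le_trans (Finset.card_le_card hEU) hUbound
  -- Step 2: pass to the reals
  have hPerm : (Fintype.card (Equiv.Perm (Fin (2*d))) : ℝ) = (Nat.factorial (2*d) : ℝ) := by
    rw [Fintype.card_perm, Fintype.card_fin]
  have hfacpos : (0:ℝ) < (Nat.factorial (2*d) : ℝ) := by exact_mod_cast Nat.factorial_pos (2*d)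
  have hRHSnn : (0:ℝ) ≤ ((k:ℝ) / (1.1 * d)) ^ ((k : ℝ) / 3) := by
    apply Real.rpow_nonneg
    positivity
  have main : ((d.choose m * (Nat.descFactorial k (2*m) * Nat.factorial (2*d - 2*m)) : ℕ) : ℝ) /
      (Nat.factorial (2*d) : ℝ) ≤ ((k:ℝ) / (1.1 * d)) ^ ((k : ℝ) / 3) := by
    by_cases h2m : 2*m ≤ k
    case neg =>
      have : Nat.descFactorial k (2*m) = 0 := by
        rw [Nat.descFactorial_eq_zero_iff_lt]
        omega
      rw [this]
      simpa using hRHSnn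
    case pos =>
      have hmd : m ≤ d := by omega
      have h2m2d : 2*m ≤ 2*d := by omega
      -- exact identity
      have hnat : (d.choose m * (Nat.descFactorial k (2*m) * Nat.factorial (2*d - 2*m))) *
          Nat.choose (2*d) (2*m) = d.choose m * Nat.choose k (2*m) * Nat.factorial (2*d) := by
        rw [Nat.descFactorial_eq_factorial_mul_choose,
          ← Nat.choose_mul_factorial_mul_factorial h2m2d]
        ring
      have hCpos : (0:ℝ) < (Nat.choose (2*d) (2*m) : ℝ) := by
        exact_mod_cast Nat.choose_pos h2m2d
      have hdmpos : (0:ℝ) < (Nat.choose d m : ℝ) := by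
        exact_mod_cast Nat.choose_pos hmd
      have hident : ((d.choose m * (Nat.descFactorial k (2*m) * Nat.factorial (2*d - 2*m)) : ℕ) : ℝ) /
          (Nat.factorial (2*d) : ℝ) =
          ((d.choose m : ℝ) * (Nat.choose k (2*m) : ℝ)) / (Nat.choose (2*d) (2*m) : ℝ) := by
        rw [div_eq_div_iff (ne_of_gt hfacpos) (ne_of_gt hCpos)]
        have := hnat
        have hcast : ((d.choose m * (Nat.descFactorial k (2*m) * Nat.factorial (2*d - 2*m)) : ℕ) : ℝ) *
            (Nat.choose (2*d) (2*m) : ℝ) =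
            ((d.choose m : ℝ) * (Nat.choose k (2*m) : ℝ)) * (Nat.factorial (2*d) : ℝ) := by
          exact_mod_cast congrArg (Nat.cast : ℕ → ℝ) this
        linarith [hcast]
      -- Vandermonde
      have hVander : (Nat.choose d m : ℝ) * (Nat.choose d m : ℝ) ≤ (Nat.choose (2*d) (2*m) : ℝ) := by
        have h := Nat.add_choose_eq d d (2*m)
        have hmem : ((m, m) : ℕ × ℕ) ∈ Finset.HasAntidiagonal.antidiagonal (2*m) := by
          rw [Finset.HasAntidiagonal.mem_antidiagonal]
          omega
        have hterm : d.choose m * d.choose m ≤ (d + d).choose (2*m) := by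
          rw [h]
          exact Finset.single_le_sum (f := fun p : ℕ×ℕ => d.choose p.1 * d.choose p.2) (fun p _ => Nat.zero_le _) hmem
        have h2dd : 2*d = d + d := by ring
        rw [h2dd]
        exact_mod_cast hterm
      have step1 : ((d.choose m : ℝ) * (Nat.choose k (2*m) : ℝ)) / (Nat.choose (2*d) (2*m) : ℝ) ≤
          (Nat.choose k (2*m) : ℝ) / (Nat.choose d m : ℝ) := by
        have : ((d.choose m : ℝ) * (Nat.choose k (2*m) : ℝ)) / (Nat.choose (2*d) (2*m) : ℝ) ≤
            ((d.choose m : ℝ) * (Nat.choose k (2*m) : ℝ)) /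
              ((Nat.choose d m : ℝ) * (Nat.choose d m : ℝ)) := by
          gcongr
          all_goals first | exact hVander | positivity
        apply le_trans this
        rw [mul_div_mul_left _ _ (ne_of_gt hdmpos)]
      -- bound on the numerator
      have hb2 : (Nat.choose k (2*m) : ℝ) ≤ (150:ℝ) ^ ((k:ℝ)/50) := by
        have hsymm : Nat.choose k (k - 2*m) = Nat.choose k (2*m) := Nat.choose_symm h2m
        rw [← hsymm]
        exact choose_le_rpow k (k - 2*m) hk1 (by omega)
      -- lower bound on the denominator
      have hd0 : (0:ℝ) < (d:ℝ) := by exact_mod_cast (hk1.trans hkd)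
      have hk0 : (0:ℝ) < (k:ℝ) := by exact_mod_cast hk1
      have hm0 : (0:ℝ) < (m:ℝ) := by exact_mod_cast hm1
      have hbase1 : (1:ℝ) ≤ 2*(d:ℝ)/(k:ℝ) := by
        rw [le_div_iff₀ hk0]
        have : (k:ℝ) ≤ (d:ℝ) := by exact_mod_cast hkd
        linarith
      have hb3 : (2*(d:ℝ)/(k:ℝ)) ^ ((49*(k:ℝ))/100) ≤ (Nat.choose d m : ℝ) := by
        have l2 : ((d:ℝ))^m ≤ ((m:ℝ))^m * (Nat.choose d m : ℝ) := by
          exact_mod_cast pow_le_pow_mul_choose m d hmd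
        have c1 : ((d:ℝ)/(m:ℝ))^m ≤ (Nat.choose d m : ℝ) := by
          rw [div_pow, div_le_iff₀ (by positivity)]
          linarith [l2]
        have c2 : (2*(d:ℝ)/(k:ℝ))^m ≤ ((d:ℝ)/(m:ℝ))^m := by
          apply pow_le_pow_left₀ (by positivity)
          rw [div_le_div_iff₀ hk0 hm0]
          have h2mk : (2*(m:ℝ)) ≤ (k:ℝ) := by exact_mod_cast h2m
          nlinarith
        have c3 : (2*(d:ℝ)/(k:ℝ)) ^ ((49*(k:ℝ))/100) ≤ (2*(d:ℝ)/(k:ℝ))^((m:ℕ):ℝ) := by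
          apply Real.rpow_le_rpow_of_exponent_le hbase1
          have : (49*(k:ℝ)) ≤ 100*(m:ℝ) := by exact_mod_cast hm49
          linarith
        rw [Real.rpow_natCast] at c3
        exact le_trans c3 (le_trans c2 c1)
      have hrpowpos : (0:ℝ) < (2*(d:ℝ)/(k:ℝ)) ^ ((49*(k:ℝ))/100) := by
        apply Real.rpow_pos_of_pos
        positivity
      have step2 : (Nat.choose k (2*m) : ℝ) / (Nat.choose d m : ℝ) ≤
          (150:ℝ) ^ ((k:ℝ)/50) / (2*(d:ℝ)/(k:ℝ)) ^ ((49*(k:ℝ))/100) := by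
        apply div_le_div₀ (by positivity) hb2 hrpowpos hb3
      have step3 : (150:ℝ) ^ ((k:ℝ)/50) / (2*(d:ℝ)/(k:ℝ)) ^ ((49*(k:ℝ))/100) =
          (150:ℝ) ^ ((k:ℝ)/50) * ((k:ℝ)/(2*(d:ℝ))) ^ ((49*(k:ℝ))/100) := by
        rw [div_eq_mul_inv, ← Real.inv_rpow (by positivity)]
        congr 2
        rw [inv_div]
      calc ((d.choose m * (Nat.descFactorial k (2*m) * Nat.factorial (2*d - 2*m)) : ℕ) : ℝ) /
            (Nat.factorial (2*d) : ℝ)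
          = ((d.choose m : ℝ) * (Nat.choose k (2*m) : ℝ)) / (Nat.choose (2*d) (2*m) : ℝ) := hident
        _ ≤ (Nat.choose k (2*m) : ℝ) / (Nat.choose d m : ℝ) := step1
        _ ≤ (150:ℝ) ^ ((k:ℝ)/50) / (2*(d:ℝ)/(k:ℝ)) ^ ((49*(k:ℝ))/100) := step2
        _ = (150:ℝ) ^ ((k:ℝ)/50) * ((k:ℝ)/(2*(d:ℝ))) ^ ((49*(k:ℝ))/100) := step3
        _ ≤ ((k:ℝ)/(1.1*(d:ℝ))) ^ ((k:ℝ)/3) := final_ineq k d hk1 hkd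
  -- combine
  rw [hPerm]
  calc (E.card : ℝ) / (Nat.factorial (2*d) : ℝ)
      ≤ ((d.choose m * (Nat.descFactorial k (2*m) * Nat.factorial (2*d - 2*m)) : ℕ) : ℝ) /
        (Nat.factorial (2*d) : ℝ) := by
        have hEb : ((E.card : ℕ) : ℝ) ≤
            ((d.choose m * (Nat.descFactorial k (2*m) * Nat.factorial (2*d - 2*m)) : ℕ) : ℝ) :=
          Nat.cast_le.mpr hEbound
        gcongr
      _ ≤ ((k:ℝ) / (1.1 * d)) ^ ((k : ℝ) / 3) := main
end
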